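/- Let c_n denote the number of level one cheesy polyominoes with area n (counted up to translation). Then c_1 = 1, c_2 = 3, c_3 = 11, and for every n ≥ 4 one has c_n = 6·c_{n−1} − 8·c_{n−2} + c_{n−3}. -/

import Mathlib

open Finset Filter

noncomputable section

/-- A cell of the hexagonal lattice, modelled as a point of ℤ². -/
abbrev Cell : Type := ℤ × ℤ

/-- Hexagonal adjacency on ℤ². -/
def HexAdj (a b : Cell) : Prop :=
  (b.1 - a.1, b.2 - a.2) ∈
    ({(1,0), (-1,0), (0,1), (0,-1), (1,1), (-1,-1)} : Set (ℤ × ℤ))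

/-- A (hexagonal-celled) polyomino: a finite nonempty set of cells,
connected under hexagonal adjacency. -/
def IsPolyomino (P : Finset Cell) : Prop :=
  P.Nonempty ∧ ∀ a ∈ P, ∀ b ∈ P,
    Relation.ReflTransGen (fun u v : Cell => u ∈ P ∧ v ∈ P ∧ HexAdj u v) a b

/-- The canonical representative of a translation class: both the minimal
abscissa and the minimal ordinate are `0`. -/
def Normalized (P : Finset Cell) : Prop :=
  (∀ c ∈ P, 0 ≤ c.1 ∧ 0 ≤ c.2) ∧ (∃ c ∈ P, c.1 = 0) ∧ (∃ c ∈ P, c.2 = 0)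

/-- Ordinates of the cells of the column of `P` at abscissa `x`. -/
def columnYs (P : Finset Cell) (x : ℤ) : Finset ℤ :=
  (P.filter (fun c => c.1 = x)).image Prod.snd

/-- Number of connected components (maximal runs of consecutive integers) of a
finite set of integers: each component is counted via its least element. -/
def numComponents (s : Finset ℤ) : ℕ := (s.filter (fun a => a - 1 ∉ s)).card

/-- Every nonempty column has exactly one connected component. -/
def ColumnConvex (P : Finset Cell) : Prop :=
  ∀ x : ℤ, (columnYs P x).Nonempty → numComponents (columnYs P x) = 1

/-- `a` and `b` lie in the same connected component of `s`. -/
def SameComp (s : Finset ℤ) (a b : ℤ) : Prop :=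
  a ∈ s ∧ b ∈ s ∧ ∀ c : ℤ, min a b ≤ c → c ≤ max a b → c ∈ s

/-- The leftmost nonempty column has exactly one connected component and, for
every pair of nonempty columns at consecutive abscissas `x`, `x+1`, every
connected component of the column at `x+1` contains a cell adjacent to some
cell of the column at `x`. -/
def RightwardSemiDirected (P : Finset Cell) : Prop :=
  (∀ x : ℤ, (columnYs P x).Nonempty → (∀ x' : ℤ, x' < x → columnYs P x' = ∅) →
      numComponents (columnYs P x) = 1) ∧
  (∀ x : ℤ, (columnYs P x).Nonempty → (columnYs P (x+1)).Nonempty →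
      ∀ b ∈ columnYs P (x+1), ∃ b' ∈ columnYs P (x+1),
        SameComp (columnYs P (x+1)) b b' ∧
        ∃ c ∈ columnYs P x, HexAdj (x, c) (x+1, b'))

/-- The cells of the gap(s) of a column: the integers between the least and the
greatest element that do not belong to the column. -/
def gapCells (s : Finset ℤ) : Finset ℤ :=
  Finset.Icc (WithTop.untopD 0 s.min) (WithBot.unbotD 0 s.max) \ s

def gapSize (s : Finset ℤ) : ℕ := (gapCells s).card

/-- Level `m` cheesy polyomino. -/
def IsCheesy (m : ℕ) (P : Finset Cell) : Prop :=
  IsPolyomino P ∧ RightwardSemiDirected P ∧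
  ∀ x : ℤ, numComponents (columnYs P x) ≤ 2 ∧
    (numComponents (columnYs P x) = 2 → gapSize (columnYs P x) ≤ m)

/-- Height of a (nonempty) column: max − min + 1. -/
def heightN (s : Finset ℤ) : ℕ :=
  (WithBot.unbotD 0 s.max - WithTop.untopD 0 s.min + 1).toNat

/-- The maximal abscissa of a polyomino. -/
def maxX (P : Finset Cell) : ℤ := WithBot.unbotD 0 (P.image Prod.fst).max

/-- The last column (ordinates of the column of maximal abscissa). -/
def lastCol (P : Finset Cell) : Finset ℤ := columnYs P (maxX P)

/-- Number of level `m` cheesy polyominoes with area `n`, counted up to translation. -/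
def cheesyCount (m n : ℕ) : ℕ :=
  Nat.card {P : Finset Cell // IsCheesy m P ∧ Normalized P ∧ P.card = n}

/-! ### M1: columns of integers -/

namespace Cheesy

/-- minimum of a finset of integers (junk value 0 on ∅) -/
def mn (s : Finset ℤ) : ℤ := WithTop.untopD 0 s.min
def mx (s : Finset ℤ) : ℤ := WithBot.unbotD 0 s.max

lemma mn_eq (s : Finset ℤ) (h : s.Nonempty) : mn s = s.min' h := by
  rw [mn, ← Finset.coe_min' h]; rfl

lemma mx_eq (s : Finset ℤ) (h : s.Nonempty) : mx s = s.max' h := by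
  rw [mx, ← Finset.coe_max' h]; rfl

lemma mn_mem (s : Finset ℤ) (h : s.Nonempty) : mn s ∈ s := by
  rw [mn_eq s h]; exact s.min'_mem h

lemma mx_mem (s : Finset ℤ) (h : s.Nonempty) : mx s ∈ s := by
  rw [mx_eq s h]; exact s.max'_mem h

lemma mn_le {s : Finset ℤ} {y : ℤ} (hy : y ∈ s) : mn s ≤ y := by
  rw [mn_eq s ⟨y, hy⟩]; exact s.min'_le y hy

lemma le_mx {s : Finset ℤ} {y : ℤ} (hy : y ∈ s) : y ≤ mx s := by
  rw [mx_eq s ⟨y, hy⟩]; exact s.le_max' y hy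

lemma gapCells_def (s : Finset ℤ) : gapCells s = Finset.Icc (mn s) (mx s) \ s := rfl

lemma heightN_def (s : Finset ℤ) : heightN s = (mx s - mn s + 1).toNat := rfl

def IsCol1 (s : Finset ℤ) : Prop := ∃ a b : ℤ, a ≤ b ∧ s = Finset.Icc a b

def IsCol2 (s : Finset ℤ) : Prop :=
  ∃ a g b : ℤ, a < g ∧ g < b ∧ s = Finset.Icc a b \ {g}

lemma mn_Icc {a b : ℤ} (h : a ≤ b) : mn (Finset.Icc a b) = a := by
  have hne : (Finset.Icc a b).Nonempty := Finset.nonempty_Icc.2 h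
  have h1 := mn_mem _ hne
  have h2 := mn_le (s := Finset.Icc a b) (Finset.mem_Icc.2 ⟨le_refl a, h⟩)
  simp only [Finset.mem_Icc] at h1
  omega

lemma mx_Icc {a b : ℤ} (h : a ≤ b) : mx (Finset.Icc a b) = b := by
  have hne : (Finset.Icc a b).Nonempty := Finset.nonempty_Icc.2 h
  have h1 := mx_mem _ hne
  have h2 := le_mx (s := Finset.Icc a b) (Finset.mem_Icc.2 ⟨h, le_refl b⟩)
  simp only [Finset.mem_Icc] at h1
  omega

lemma mn_Icc_diff {a g b : ℤ} (h1 : a < g) (h2 : g < b) :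
    mn (Finset.Icc a b \ {g}) = a := by
  have ha : a ∈ Finset.Icc a b \ {g} := by
    simp only [Finset.mem_sdiff, Finset.mem_Icc, Finset.mem_singleton]; omega
  have h3 := mn_mem _ ⟨a, ha⟩
  have h4 := mn_le ha
  simp only [Finset.mem_sdiff, Finset.mem_Icc, Finset.mem_singleton] at h3
  omega

lemma mx_Icc_diff {a g b : ℤ} (h1 : a < g) (h2 : g < b) :
    mx (Finset.Icc a b \ {g}) = b := by
  have hb : b ∈ Finset.Icc a b \ {g} := by
    simp only [Finset.mem_sdiff, Finset.mem_Icc, Finset.mem_singleton]; omega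
  have h3 := mx_mem _ ⟨b, hb⟩
  have h4 := le_mx hb
  simp only [Finset.mem_sdiff, Finset.mem_Icc, Finset.mem_singleton] at h3
  omega

lemma numComponents_Icc {a b : ℤ} (h : a ≤ b) : numComponents (Finset.Icc a b) = 1 := by
  have : (Finset.Icc a b).filter (fun y => y - 1 ∉ Finset.Icc a b) = {a} := by
    ext y
    simp only [Finset.mem_filter, Finset.mem_Icc, Finset.mem_singleton]
    constructor
    · rintro ⟨h1, h2⟩; omega
    · rintro rfl; omega
  rw [numComponents, this, Finset.card_singleton]

lemma numComponents_Icc_diff {a g b : ℤ} (h1 : a < g) (h2 : g < b) :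
    numComponents (Finset.Icc a b \ {g}) = 2 := by
  have : (Finset.Icc a b \ {g}).filter (fun y => y - 1 ∉ Finset.Icc a b \ {g})
      = {a, g + 1} := by
    ext y
    simp only [Finset.mem_filter, Finset.mem_sdiff, Finset.mem_Icc, Finset.mem_singleton,
      Finset.mem_insert, not_and, not_not]
    constructor
    · rintro ⟨⟨⟨hy1, hy2⟩, hy3⟩, h4⟩
      by_cases hc : a ≤ y - 1 ∧ y - 1 ≤ b
      · have := h4 hc; omega
      · omega
    · rintro (rfl | rfl)
      · refine ⟨⟨⟨le_refl _, by omega⟩, by omega⟩, ?_⟩; intro hc; omega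
      · refine ⟨⟨⟨by omega, by omega⟩, by omega⟩, ?_⟩; intro hc; omega
  rw [numComponents, this]
  rw [Finset.card_insert_of_notMem (by simp; omega), Finset.card_singleton]

lemma gapSize_Icc {a b : ℤ} (h : a ≤ b) : gapSize (Finset.Icc a b) = 0 := by
  rw [gapSize, gapCells_def, mn_Icc h, mx_Icc h, Finset.sdiff_self, Finset.card_empty]

lemma gapCells_Icc_diff {a g b : ℤ} (h1 : a < g) (h2 : g < b) :
    gapCells (Finset.Icc a b \ {g}) = {g} := by
  rw [gapCells_def, mn_Icc_diff h1 h2, mx_Icc_diff h1 h2]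
  ext y
  simp only [Finset.mem_sdiff, Finset.mem_Icc, Finset.mem_singleton]
  constructor
  · rintro ⟨hy, h3⟩
    by_contra hne
    exact h3 ⟨hy, hne⟩
  · rintro rfl
    exact ⟨⟨by omega, by omega⟩, fun hc => hc.2 rfl⟩

lemma gapSize_Icc_diff {a g b : ℤ} (h1 : a < g) (h2 : g < b) :
    gapSize (Finset.Icc a b \ {g}) = 1 := by
  rw [gapSize, gapCells_Icc_diff h1 h2, Finset.card_singleton]

lemma heightN_Icc {a b : ℤ} (h : a ≤ b) : heightN (Finset.Icc a b) = (b - a + 1).toNat := by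
  rw [heightN_def, mn_Icc h, mx_Icc h]

lemma heightN_Icc_diff {a g b : ℤ} (h1 : a < g) (h2 : g < b) :
    heightN (Finset.Icc a b \ {g}) = (b - a + 1).toNat := by
  rw [heightN_def, mn_Icc_diff h1 h2, mx_Icc_diff h1 h2]

lemma card_Icc_diff {a g b : ℤ} (h1 : a < g) (h2 : g < b) :
    (Finset.Icc a b \ {g}).card = (b - a).toNat := by
  rw [Finset.card_sdiff_of_subset (by simp only [Finset.singleton_subset_iff, Finset.mem_Icc]; omega)]
  rw [Int.card_Icc, Finset.card_singleton]
  omega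

/-- classification of admissible columns -/
lemma col_classify {s : Finset ℤ} (hne : s.Nonempty) (h2 : numComponents s ≤ 2)
    (hg : numComponents s = 2 → gapSize s ≤ 1) : IsCol1 s ∨ IsCol2 s := by
  set a := mn s with ha
  set b := mx s with hb
  have hab : a ≤ b := le_trans (mn_le (mx_mem s hne)) (le_refl b)
  by_cases hIcc : s = Finset.Icc a b
  · exact Or.inl ⟨a, b, hab, hIcc⟩
  · -- there is a gap cell g
    have hsub : s ⊆ Finset.Icc a b := fun y hy =>
      Finset.mem_Icc.2 ⟨mn_le hy, le_mx hy⟩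
    obtain ⟨g, hgIcc, hgs⟩ : ∃ g, g ∈ Finset.Icc a b ∧ g ∉ s := by
      by_contra hc
      push_neg at hc
      exact hIcc (Finset.Subset.antisymm hsub (fun y hy => hc y hy))
    have hga : a < g := by
      rcases lt_or_eq_of_le (Finset.mem_Icc.1 hgIcc).1 with h | h
      · exact h
      · exact absurd (h ▸ mn_mem s hne) hgs
    have hgb : g < b := by
      rcases lt_or_eq_of_le (Finset.mem_Icc.1 hgIcc).2 with h | h
      · exact h
      · exact absurd (h.symm ▸ mx_mem s hne) hgs
    -- upper part of s
    have hbig : b ∈ s.filter (fun y => g < y) := by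
      simp only [Finset.mem_filter]; exact ⟨mx_mem s hne, hgb⟩
    set m := (s.filter (fun y => g < y)).min' ⟨b, hbig⟩ with hm
    have hmmem := (s.filter (fun y => g < y)).min'_mem ⟨b, hbig⟩
    simp only [Finset.mem_filter] at hmmem
    have hma : a ∈ s.filter (fun y => y - 1 ∉ s) := by
      simp only [Finset.mem_filter]
      refine ⟨mn_mem s hne, fun hc => ?_⟩
      have := mn_le hc; omega
    have hmm : m ∈ s.filter (fun y => y - 1 ∉ s) := by
      simp only [Finset.mem_filter]
      refine ⟨hmmem.1, fun hc => ?_⟩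
      by_cases hgt : g < m - 1
      · have := (s.filter (fun y => g < y)).min'_le (m-1)
          (by simp only [Finset.mem_filter]; exact ⟨hc, hgt⟩)
        omega
      · have : m - 1 = g := by omega
        exact hgs (this ▸ hc)
    have hcard2 : 2 ≤ numComponents s := by
      rw [numComponents]
      have : a ≠ m := by omega
      exact Finset.one_lt_card.2 ⟨a, hma, m, hmm, this⟩
    have heq2 : numComponents s = 2 := le_antisymm h2 hcard2
    have hgap := hg heq2
    -- gapCells s = {g}
    have hgmem : g ∈ gapCells s := by
      rw [gapCells_def, Finset.mem_sdiff, ← ha, ← hb]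
      exact ⟨hgIcc, hgs⟩
    have hgc : gapCells s = {g} := by
      apply Finset.eq_singleton_iff_unique_mem.2
      refine ⟨hgmem, fun y hy => ?_⟩
      by_contra hne'
      have : 1 < (gapCells s).card := Finset.one_lt_card.2 ⟨y, hy, g, hgmem, hne'⟩
      rw [gapSize] at hgap
      omega
    refine Or.inr ⟨a, g, b, hga, hgb, ?_⟩
    ext y
    simp only [Finset.mem_sdiff, Finset.mem_Icc, Finset.mem_singleton]
    constructor
    · intro hy
      exact ⟨⟨mn_le hy, le_mx hy⟩, fun hc => hgs (hc ▸ hy)⟩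
    · rintro ⟨hy1, hy2⟩
      by_contra hc
      have : y ∈ gapCells s := by
        rw [gapCells_def, Finset.mem_sdiff, ← ha, ← hb]
        exact ⟨Finset.mem_Icc.2 hy1, hc⟩
      rw [hgc, Finset.mem_singleton] at this
      exact hy2 this

end Cheesy
/-! ### M2: columnYs, HexAdj, shifts -/

namespace Cheesy

lemma mem_columnYs {P : Finset Cell} {x y : ℤ} : y ∈ columnYs P x ↔ (x, y) ∈ P := by
  simp only [columnYs, Finset.mem_image, Finset.mem_filter]
  constructor
  · rintro ⟨c, ⟨hc, hc1⟩, hc2⟩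
    have : c = (x, y) := Prod.ext hc1 hc2
    exact this ▸ hc
  · intro h
    exact ⟨(x, y), ⟨h, rfl⟩, rfl⟩

lemma hexAdj_iff {u v : Cell} : HexAdj u v ↔
    (v.1 - u.1, v.2 - u.2) = ((1:ℤ),(0:ℤ)) ∨ (v.1 - u.1, v.2 - u.2) = ((-1:ℤ),(0:ℤ)) ∨
    (v.1 - u.1, v.2 - u.2) = ((0:ℤ),(1:ℤ)) ∨ (v.1 - u.1, v.2 - u.2) = ((0:ℤ),(-1:ℤ)) ∨
    (v.1 - u.1, v.2 - u.2) = ((1:ℤ),(1:ℤ)) ∨ (v.1 - u.1, v.2 - u.2) = ((-1:ℤ),(-1:ℤ)) := by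
  simp [HexAdj, Set.mem_insert_iff, Set.mem_singleton_iff]

lemma hexAdj_iff' {u v : Cell} : HexAdj u v ↔
    (v.1 - u.1 = 1 ∧ v.2 - u.2 = 0) ∨ (v.1 - u.1 = -1 ∧ v.2 - u.2 = 0) ∨
    (v.1 - u.1 = 0 ∧ v.2 - u.2 = 1) ∨ (v.1 - u.1 = 0 ∧ v.2 - u.2 = -1) ∨
    (v.1 - u.1 = 1 ∧ v.2 - u.2 = 1) ∨ (v.1 - u.1 = -1 ∧ v.2 - u.2 = -1) := by
  rw [hexAdj_iff]
  simp only [Prod.mk.injEq]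

lemma hexAdj_symm {u v : Cell} (h : HexAdj u v) : HexAdj v u := by
  rw [hexAdj_iff'] at h ⊢
  omega

lemma hexAdj_right {x c y : ℤ} : HexAdj (x, c) (x + 1, y) ↔ y = c ∨ y = c + 1 := by
  rw [hexAdj_iff']
  simp only []
  omega

lemma hexAdj_up {x y : ℤ} : HexAdj (x, y) (x, y + 1) := by
  rw [hexAdj_iff']; simp only []; omega

lemma hexAdj_bound {u v : Cell} (h : HexAdj u v) :
    v.1 - u.1 ≤ 1 ∧ u.1 - v.1 ≤ 1 ∧ v.2 - u.2 ≤ 1 ∧ u.2 - v.2 ≤ 1 := by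
  rw [hexAdj_iff'] at h; omega

/-- intermediate value property along polyomino paths -/
lemma path_intermediate {P : Finset Cell} (f : Cell → ℤ)
    (hf : ∀ u v : Cell, HexAdj u v → f v - f u ≤ 1 ∧ f u - f v ≤ 1)
    {a b : Cell} (ha : a ∈ P)
    (h : Relation.ReflTransGen (fun u v : Cell => u ∈ P ∧ v ∈ P ∧ HexAdj u v) a b) :
    ∀ z : ℤ, min (f a) (f b) ≤ z → z ≤ max (f a) (f b) → ∃ c ∈ P, f c = z := by
  induction h with
  | refl =>
    intro z h1 h2
    refine ⟨a, ha, ?_⟩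
    simp only [min_self, max_self] at h1 h2
    omega
  | @tail b' c' hab hbc ih =>
    intro z h1 h2
    obtain ⟨hb, hc, hadj⟩ := hbc
    have hb1 := hf _ _ hadj
    by_cases hcase : min (f a) (f b') ≤ z ∧ z ≤ max (f a) (f b')
    · exact ih z hcase.1 hcase.2
    · have : z = f c' := by omega
      exact ⟨c', hc, this.symm⟩

/-- vertical connectivity inside a column -/
lemma vert_path {P : Finset Cell} {x y z : ℤ} (hyz : y ≤ z)
    (h : ∀ t : ℤ, y ≤ t → t ≤ z → (x, t) ∈ P) :
    Relation.ReflTransGen (fun u v : Cell => u ∈ P ∧ v ∈ P ∧ HexAdj u v) (x, y) (x, z) := by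
  have H : ∀ w : ℤ, y ≤ w → ((∀ t : ℤ, y ≤ t → t ≤ w → (x, t) ∈ P) →
      Relation.ReflTransGen (fun u v : Cell => u ∈ P ∧ v ∈ P ∧ HexAdj u v) (x, y) (x, w)) := by
    intro w hw
    refine Int.le_induction (motive := fun w _ => (∀ t : ℤ, y ≤ t → t ≤ w → (x, t) ∈ P) →
      Relation.ReflTransGen (fun u v : Cell => u ∈ P ∧ v ∈ P ∧ HexAdj u v) (x, y) (x, w))
      ?_ ?_ w hw
    · intro _; exact Relation.ReflTransGen.refl
    · intro m hm ih hh
      exact (ih (fun t ht1 ht2 => hh t ht1 (by omega))).tail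
        ⟨hh m hm (by omega), hh (m+1) (by omega) (by omega), hexAdj_up⟩
  exact H z hyz h

/-- shift of a finset of integers -/
lemma mem_image_add {s : Finset ℤ} {t y : ℤ} :
    y ∈ s.image (fun v => v + t) ↔ y - t ∈ s := by
  simp only [Finset.mem_image]
  constructor
  · rintro ⟨v, hv, rfl⟩; simpa using hv
  · intro h; exact ⟨y - t, h, by ring⟩

lemma Icc_image_add {a b t : ℤ} :
    (Finset.Icc a b).image (fun v => v + t) = Finset.Icc (a + t) (b + t) := by
  ext y
  rw [mem_image_add]
  simp only [Finset.mem_Icc]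
  omega

lemma isCol1_shift {s : Finset ℤ} {t : ℤ} (h : IsCol1 s) :
    IsCol1 (s.image (fun v => v + t)) := by
  obtain ⟨a, b, hab, rfl⟩ := h
  exact ⟨a + t, b + t, by omega, Icc_image_add⟩

lemma isCol2_shift {s : Finset ℤ} {t : ℤ} (h : IsCol2 s) :
    IsCol2 (s.image (fun v => v + t)) := by
  obtain ⟨a, g, b, h1, h2, rfl⟩ := h
  refine ⟨a + t, g + t, b + t, by omega, by omega, ?_⟩
  ext y
  rw [mem_image_add]
  simp only [Finset.mem_sdiff, Finset.mem_Icc, Finset.mem_singleton]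
  omega

lemma mn_shift {s : Finset ℤ} (h : s.Nonempty) (t : ℤ) :
    mn (s.image (fun v => v + t)) = mn s + t := by
  have h2 : (s.image (fun v => v + t)).Nonempty := h.image _
  have l1 := mn_mem _ h2
  rw [mem_image_add] at l1
  have l2 := mn_le (mem_image_add.2 (by rw [show mn s + t - t = mn s by ring]; exact mn_mem s h))
  have l3 := mn_le l1
  have l4 := mn_le (mx_mem s h)
  omega

lemma mx_shift {s : Finset ℤ} (h : s.Nonempty) (t : ℤ) :
    mx (s.image (fun v => v + t)) = mx s + t := by
  have h2 : (s.image (fun v => v + t)).Nonempty := h.image _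
  have l1 := mx_mem _ h2
  rw [mem_image_add] at l1
  have l2 := le_mx (mem_image_add.2 (by rw [show mx s + t - t = mx s by ring]; exact mx_mem s h))
  have l3 := le_mx l1
  omega

end Cheesy
/-! ### M3: Touch, ColsOK, analysis and synthesis -/

namespace Cheesy

lemma numComponents_empty : numComponents (∅ : Finset ℤ) = 0 := by
  simp [numComponents]

def Touch (s t : Finset ℤ) : Prop :=
  ∀ y ∈ t, ∃ z ∈ t, SameComp t y z ∧ (z ∈ s ∨ z - 1 ∈ s)

structure ColsOK (S : ℤ → Finset ℤ) (w : ℤ) : Prop where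
  wpos : 1 ≤ w
  empt : ∀ x : ℤ, (x < 0 ∨ w ≤ x) → S x = ∅
  nonemp : ∀ x : ℤ, 0 ≤ x → x < w → (S x).Nonempty
  first : IsCol1 (S 0)
  shape : ∀ x : ℤ, 0 ≤ x → x < w → IsCol1 (S x) ∨ IsCol2 (S x)
  conn : ∀ x : ℤ, 0 ≤ x → x + 1 < w → Touch (S x) (S (x+1))

lemma sameComp_Icc {a b y z : ℤ} (hy : y ∈ Finset.Icc a b) (hz : z ∈ Finset.Icc a b) :
    SameComp (Finset.Icc a b) y z := by
  simp only [Finset.mem_Icc] at hy hz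
  refine ⟨Finset.mem_Icc.2 hy, Finset.mem_Icc.2 hz, fun c h1 h2 => Finset.mem_Icc.2 ?_⟩
  simp only [le_min_iff, min_le_iff, max_le_iff, le_max_iff] at *
  omega

lemma sameComp_Icc_diff {a g b y z : ℤ} (hy : y ∈ Finset.Icc a b \ {g})
    (hz : z ∈ Finset.Icc a b \ {g}) (hside : y < g ↔ z < g) :
    SameComp (Finset.Icc a b \ {g}) y z := by
  simp only [Finset.mem_sdiff, Finset.mem_Icc, Finset.mem_singleton] at hy hz
  refine ⟨?_, ?_, fun c h1 h2 => ?_⟩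
  · simp only [Finset.mem_sdiff, Finset.mem_Icc, Finset.mem_singleton]; tauto
  · simp only [Finset.mem_sdiff, Finset.mem_Icc, Finset.mem_singleton]; tauto
  · simp only [Finset.mem_sdiff, Finset.mem_Icc, Finset.mem_singleton]
    simp only [le_min_iff, min_le_iff, max_le_iff, le_max_iff] at h1 h2 ⊢
    omega

lemma sameComp_side {a g b y z : ℤ} (h1 : a < g) (h2 : g < b)
    (h : SameComp (Finset.Icc a b \ {g}) y z) : y < g ↔ z < g := by
  obtain ⟨hy, hz, hmid⟩ := h
  simp only [Finset.mem_sdiff, Finset.mem_Icc, Finset.mem_singleton] at hy hz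
  by_contra hc
  have hg : g ∈ Finset.Icc a b \ {g} := by
    apply hmid g
    · simp only [le_min_iff, min_le_iff] at *; omega
    · simp only [le_max_iff, max_le_iff] at *; omega
  simp at hg

lemma shadow_mem {s : Finset ℤ} (h : IsCol1 s ∨ IsCol2 s) {y : ℤ}
    (h1 : mn s ≤ y) (h2 : y ≤ mx s + 1) : y ∈ s ∨ y - 1 ∈ s := by
  rcases h with ⟨a, b, hab, rfl⟩ | ⟨a, g, b, hag, hgb, rfl⟩
  · rw [mn_Icc hab] at h1
    rw [mx_Icc hab] at h2
    simp only [Finset.mem_Icc]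
    omega
  · rw [mn_Icc_diff hag hgb] at h1
    rw [mx_Icc_diff hag hgb] at h2
    simp only [Finset.mem_sdiff, Finset.mem_Icc, Finset.mem_singleton]
    omega

lemma shadow_bound {s : Finset ℤ} {y : ℤ} (h : y ∈ s ∨ y - 1 ∈ s) :
    mn s ≤ y ∧ y ≤ mx s + 1 := by
  rcases h with h | h
  · exact ⟨mn_le h, by have := le_mx h; omega⟩
  · have := mn_le h; have := le_mx h; omega

lemma touch_col1_iff {s t : Finset ℤ} (hs : IsCol1 s ∨ IsCol2 s) {a b : ℤ}
    (hab : a ≤ b) (ht : t = Finset.Icc a b) :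
    Touch s t ↔ (a ≤ mx s + 1 ∧ mn s ≤ b) := by
  have hmnmx : mn s ≤ mx s + 1 := by
    rcases hs with ⟨a', b', hab', rfl⟩ | ⟨a', g', b', h1', h2', rfl⟩
    · rw [mn_Icc hab', mx_Icc hab']; omega
    · rw [mn_Icc_diff h1' h2', mx_Icc_diff h1' h2']; omega
  subst ht
  constructor
  · intro h
    obtain ⟨z, hz, _, hzs⟩ := h a (Finset.mem_Icc.2 ⟨le_refl a, hab⟩)
    have h1 := shadow_bound hzs
    simp only [Finset.mem_Icc] at hz
    omega
  · rintro ⟨h1, h2⟩ y hy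
    refine ⟨min b (max a (mn s)), ?_, ?_, ?_⟩
    · simp only [Finset.mem_Icc]
      simp only [min_le_iff, le_min_iff, le_max_iff, max_le_iff]
      omega
    · apply sameComp_Icc hy
      simp only [Finset.mem_Icc, min_le_iff, le_min_iff, le_max_iff, max_le_iff]
      omega
    · apply shadow_mem hs
      · omega
      · omega

lemma touch_col2_iff {s t : Finset ℤ} (hs : IsCol1 s ∨ IsCol2 s) {a g b : ℤ}
    (hag : a < g) (hgb : g < b) (ht : t = Finset.Icc a b \ {g}) :
    Touch s t ↔ (mn s ≤ g - 1 ∧ g + 1 ≤ mx s + 1) := by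
  have hmnmx : mn s ≤ mx s + 1 := by
    rcases hs with ⟨a', b', hab', rfl⟩ | ⟨a', g', b', h1', h2', rfl⟩
    · rw [mn_Icc hab', mx_Icc hab']; omega
    · rw [mn_Icc_diff h1' h2', mx_Icc_diff h1' h2']; omega
  subst ht
  constructor
  · intro h
    have hamem : a ∈ Finset.Icc a b \ {g} := by
      simp only [Finset.mem_sdiff, Finset.mem_Icc, Finset.mem_singleton]; omega
    have hbmem : b ∈ Finset.Icc a b \ {g} := by
      simp only [Finset.mem_sdiff, Finset.mem_Icc, Finset.mem_singleton]; omega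
    obtain ⟨z1, hz1, hc1, hs1⟩ := h a hamem
    obtain ⟨z2, hz2, hc2, hs2⟩ := h b hbmem
    have hside1 := sameComp_side hag hgb hc1
    have hside2 := sameComp_side hag hgb hc2
    have hb1 := shadow_bound hs1
    have hb2 := shadow_bound hs2
    simp only [Finset.mem_sdiff, Finset.mem_Icc, Finset.mem_singleton] at hz1 hz2
    omega
  · rintro ⟨h1, h2⟩ y hy
    have hy' := hy
    simp only [Finset.mem_sdiff, Finset.mem_Icc, Finset.mem_singleton] at hy'
    by_cases hside : y < g
    · refine ⟨min (g-1) (max a (mn s)), ?_, ?_, ?_⟩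
      · simp only [Finset.mem_sdiff, Finset.mem_Icc, Finset.mem_singleton,
          min_le_iff, le_min_iff, le_max_iff, max_le_iff]
        omega
      · apply sameComp_Icc_diff hy
        · simp only [Finset.mem_sdiff, Finset.mem_Icc, Finset.mem_singleton,
            min_le_iff, le_min_iff, le_max_iff, max_le_iff]
          omega
        · omega
      · apply shadow_mem hs
        · omega
        · omega
    · refine ⟨max (g+1) (mn s), ?_, ?_, ?_⟩
      · simp only [Finset.mem_sdiff, Finset.mem_Icc, Finset.mem_singleton,
          le_max_iff, max_le_iff]
        omega
      · apply sameComp_Icc_diff hy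
        · simp only [Finset.mem_sdiff, Finset.mem_Icc, Finset.mem_singleton,
            le_max_iff, max_le_iff]
          omega
        · omega
      · apply shadow_mem hs
        · omega
        · omega

/-! #### maxX facts -/

lemma maxX_eq (P : Finset Cell) : maxX P = mx (P.image Prod.fst) := rfl

lemma le_maxX {P : Finset Cell} {c : Cell} (hc : c ∈ P) : c.1 ≤ maxX P := by
  rw [maxX_eq]
  exact le_mx (Finset.mem_image_of_mem Prod.fst hc)

lemma maxX_mem {P : Finset Cell} (h : P.Nonempty) : ∃ c ∈ P, c.1 = maxX P := by
  rw [maxX_eq]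
  have := mx_mem (P.image Prod.fst) (h.image _)
  simpa [Finset.mem_image] using this

/-! #### analysis: a cheesy normalized polyomino has good columns -/

lemma colsOK_of_cheesy {P : Finset Cell} (h : IsCheesy 1 P) (hn : Normalized P) :
    ColsOK (columnYs P) (maxX P + 1) := by
  obtain ⟨hpoly, ⟨hrsd1, hrsd2⟩, hcols⟩ := h
  obtain ⟨c0, hc0, hc0x⟩ := hn.2.1
  have hmaxX0 : 0 ≤ maxX P := hc0x ▸ le_maxX hc0
  have hempty : ∀ x : ℤ, (x < 0 ∨ maxX P + 1 ≤ x) → columnYs P x = ∅ := by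
    intro x hx
    rw [Finset.eq_empty_iff_forall_notMem]
    intro y hy
    rw [mem_columnYs] at hy
    rcases hx with hx | hx
    · exact absurd (hn.1 _ hy).1 (by omega)
    · have := le_maxX hy; simp at this; omega
  have hne : ∀ x : ℤ, 0 ≤ x → x < maxX P + 1 → (columnYs P x).Nonempty := by
    intro x hx1 hx2
    obtain ⟨c1, hc1, hc1x⟩ := maxX_mem hpoly.1
    have hpath := hpoly.2 c0 hc0 c1 hc1
    obtain ⟨c, hc, hcx⟩ := path_intermediate Prod.fst
      (fun u v hadj => by have := hexAdj_bound hadj; omega) hc0 hpath x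
      (by omega) (by omega)
    exact ⟨c.2, mem_columnYs.2 (by rwa [show ((x : ℤ), c.2) = c from Prod.ext hcx.symm rfl])⟩
  have hshape : ∀ x : ℤ, 0 ≤ x → x < maxX P + 1 →
      IsCol1 (columnYs P x) ∨ IsCol2 (columnYs P x) := by
    intro x hx1 hx2
    exact col_classify (hne x hx1 hx2) (hcols x).1 (hcols x).2
  refine ⟨by omega, hempty, hne, ?_, hshape, ?_⟩
  · have h1 : numComponents (columnYs P 0) = 1 := by
      apply hrsd1 0 (hne 0 le_rfl (by omega))
      intro x' hx'
      exact hempty x' (Or.inl hx')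
    rcases hshape 0 le_rfl (by omega) with hc | hc
    · exact hc
    · obtain ⟨a, g, b, h1', h2', heq⟩ := hc
      rw [heq, numComponents_Icc_diff h1' h2'] at h1
      omega
  · intro x hx1 hx2
    intro y hy
    obtain ⟨b', hb', hcomp, c, hc, hadj⟩ := hrsd2 x (hne x hx1 (by omega))
      (hne (x+1) (by omega) hx2) y hy
    refine ⟨b', hb', hcomp, ?_⟩
    rw [hexAdj_right] at hadj
    rcases hadj with rfl | rfl
    · exact Or.inl hc
    · exact Or.inr (by simpa using hc)

/-! #### synthesis -/

lemma cheesy_of_colsOK {P : Finset Cell} {w : ℤ} (h : ColsOK (columnYs P) w) :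
    IsCheesy 1 P := by
  obtain ⟨hw, hempty, hne, hfirst, hshape, hconn⟩ := h
  have hxrange : ∀ c : Cell, c ∈ P → 0 ≤ c.1 ∧ c.1 < w := by
    intro c hc
    by_contra hcon
    have he : columnYs P c.1 = ∅ := hempty c.1 (by omega)
    have hm : c.2 ∈ columnYs P c.1 := mem_columnYs.2 (by rwa [Prod.mk.eta])
    rw [he] at hm
    exact absurd hm (Finset.notMem_empty _)
  -- base point
  obtain ⟨a0, b0, hab0, hcol0⟩ := hfirst
  have hbase : ((0 : ℤ), a0) ∈ P := by
    rw [← mem_columnYs (P := P) (x := 0), hcol0]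
    simp only [Finset.mem_Icc]; omega
  set r := fun u v : Cell => u ∈ P ∧ v ∈ P ∧ HexAdj u v with hr
  have hrsymm : Symmetric r := by
    intro u v ⟨h1, h2, h3⟩
    exact ⟨h2, h1, hexAdj_symm h3⟩
  have hrtgsymm : Symmetric (Relation.ReflTransGen r) := by
    haveI : Std.Symm r := ⟨hrsymm⟩; exact fun a b h => Std.Symm.symm a b h
  -- vertical connection within same component
  have hvert : ∀ x y z : ℤ, y ∈ columnYs P x → z ∈ columnYs P x →
      SameComp (columnYs P x) y z → Relation.ReflTransGen r (x, y) (x, z) := by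
    intro x y z hy hz hcomp
    rcases le_total y z with hle | hle
    · apply vert_path hle
      intro t ht1 ht2
      rw [← mem_columnYs (P := P)]
      apply hcomp.2.2 t (by simp only [min_le_iff]; omega) (by simp only [le_max_iff]; omega)
    · apply hrtgsymm
      apply vert_path hle
      intro t ht1 ht2
      rw [← mem_columnYs (P := P)]
      apply hcomp.2.2 t (by simp only [min_le_iff]; omega) (by simp only [le_max_iff]; omega)
  -- every cell connects to the base
  have hmain : ∀ k : ℕ, ∀ u : Cell, u ∈ P → u.1 = (k : ℤ) →
      Relation.ReflTransGen r u ((0 : ℤ), a0) := by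
    intro k
    induction k with
    | zero =>
      intro u hu hux
      rw [Nat.cast_zero] at hux
      have hu2 : u.2 ∈ columnYs P 0 := mem_columnYs.2 (by rwa [← hux, Prod.mk.eta])
      have ha2 : a0 ∈ columnYs P 0 := by rw [hcol0]; simp only [Finset.mem_Icc]; omega
      have := hvert 0 u.2 a0 hu2 ha2 ?_
      · rwa [show ((0:ℤ), u.2) = u from Prod.ext hux.symm rfl] at this
      · rw [hcol0] at hu2 ha2 ⊢
        exact sameComp_Icc hu2 ha2
    | succ k ih =>
      intro u hu hux0
      have hux : u.1 = (k : ℤ) + 1 := by push_cast at hux0; omega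
      have hx1 : (0:ℤ) ≤ (k:ℤ) := by positivity
      have hxw : (k:ℤ) + 1 < w := by
        have := (hxrange u hu).2; omega
      have hu2 : u.2 ∈ columnYs P ((k:ℤ)+1) := mem_columnYs.2 (by
        rw [show ((k:ℤ)+1, u.2) = u from Prod.ext (by omega) rfl]; exact hu)
      obtain ⟨z, hz, hcomp, hzs⟩ := hconn (k:ℤ) hx1 hxw u.2 hu2
      have hstep1 : Relation.ReflTransGen r u ((k:ℤ)+1, z) := by
        have := hvert ((k:ℤ)+1) u.2 z hu2 hz hcomp
        rwa [show ((k:ℤ)+1, u.2) = u from Prod.ext (by omega) rfl] at this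
      -- step to column k
      have hzP : ((k:ℤ)+1, z) ∈ P := mem_columnYs.1 hz
      rcases hzs with hzk | hzk
      · have hkP : ((k:ℤ), z) ∈ P := mem_columnYs.1 hzk
        have hadj : HexAdj ((k:ℤ)+1, z) ((k:ℤ), z) :=
          hexAdj_symm (hexAdj_right.2 (Or.inl rfl))
        exact hstep1.trans ((Relation.ReflTransGen.single ⟨hzP, hkP, hadj⟩).trans
          (ih ((k:ℤ), z) hkP rfl))
      · have hkP : ((k:ℤ), z - 1) ∈ P := mem_columnYs.1 hzk
        have hadj : HexAdj ((k:ℤ)+1, z) ((k:ℤ), z - 1) := by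
          apply hexAdj_symm
          rw [show ((k:ℤ)+1, z) = ((k:ℤ)+1, (z-1)+1) by rw [Prod.mk.injEq]; omega]
          exact hexAdj_right.2 (Or.inr rfl)
        exact hstep1.trans ((Relation.ReflTransGen.single ⟨hzP, hkP, hadj⟩).trans
          (ih ((k:ℤ), z - 1) hkP rfl))
  have hpoly : IsPolyomino P := by
    refine ⟨?_, ?_⟩
    · exact ⟨((0:ℤ), a0), hbase⟩
    · intro a ha b hb
      have h1 := hmain a.1.toNat a ha (by have := (hxrange a ha).1; omega)
      have h2 := hmain b.1.toNat b hb (by have := (hxrange b hb).1; omega)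
      exact h1.trans (hrtgsymm h2)
  refine ⟨hpoly, ⟨?_, ?_⟩, ?_⟩
  · -- leftmost column
    intro x hx hleft
    have hx0 : x = 0 := by
      have h1 : ¬ (x < 0 ∨ w ≤ x) := by
        intro hc
        rw [hempty x hc] at hx
        exact Finset.not_nonempty_empty hx
      by_contra hc
      have h2 : columnYs P 0 = ∅ := hleft 0 (by omega)
      have h3 := hne 0 le_rfl (by omega)
      rw [h2] at h3
      exact absurd h3 (by simp)
    subst hx0
    rw [hcol0]
    exact numComponents_Icc hab0
  · -- rightward semi-directed
    intro x hx hx1 y hy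
    have hxb : 0 ≤ x ∧ x < w := by
      by_contra hc
      rw [hempty x (by omega)] at hx
      exact Finset.not_nonempty_empty hx
    have hxb1 : x + 1 < w := by
      by_contra hc
      rw [hempty (x+1) (by omega)] at hx1
      exact Finset.not_nonempty_empty hx1
    obtain ⟨z, hz, hcomp, hzs⟩ := hconn x hxb.1 hxb1 y hy
    refine ⟨z, hz, hcomp, ?_⟩
    rcases hzs with hzk | hzk
    · exact ⟨z, hzk, hexAdj_right.2 (Or.inl rfl)⟩
    · exact ⟨z - 1, hzk, by
        rw [show (x+1, z) = (x+1, (z-1)+1) by rw [Prod.mk.injEq]; omega]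
        exact hexAdj_right.2 (Or.inr rfl)⟩
  · -- column conditions
    intro x
    by_cases hx : 0 ≤ x ∧ x < w
    · rcases hshape x hx.1 hx.2 with ⟨a, b, hab, heq⟩ | ⟨a, g, b, h1, h2, heq⟩
      · rw [heq, numComponents_Icc hab]
        exact ⟨by omega, by omega⟩
      · rw [heq, numComponents_Icc_diff h1 h2, gapSize_Icc_diff h1 h2]
        exact ⟨le_refl 2, fun _ => le_refl 1⟩
    · rw [hempty x (by omega), numComponents_empty]
      exact ⟨by omega, by omega⟩

end Cheesy
/-! ### M4: finiteness, base cases -/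

namespace Cheesy

def CNt (n : ℕ) : Type := {P : Finset Cell // IsCheesy 1 P ∧ Normalized P ∧ P.card = n}

lemma cheesyCount_eq (n : ℕ) : cheesyCount 1 n = Nat.card (CNt n) := rfl

lemma grid_bound {n : ℕ} (P : Finset Cell) (h : IsCheesy 1 P ∧ Normalized P ∧ P.card = n) :
    P ⊆ (Finset.Icc 0 ((n:ℤ)-1)) ×ˢ (Finset.Icc 0 ((n:ℤ)-1)) := by
  obtain ⟨hch, hn, hcard⟩ := h
  have hcols := colsOK_of_cheesy hch hn
  intro c hc
  have hxy := hn.1 c hc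
  -- x bound
  have hx : c.1 ≤ (n:ℤ) - 1 := by
    have hsub : Finset.Icc (0:ℤ) (maxX P) ⊆ P.image Prod.fst := by
      intro x hx
      simp only [Finset.mem_Icc] at hx
      obtain ⟨y, hy⟩ := hcols.nonemp x hx.1 (by omega)
      rw [mem_columnYs] at hy
      exact Finset.mem_image.2 ⟨(x, y), hy, rfl⟩
    have h1 := Finset.card_le_card hsub
    have h2 := Finset.card_image_le (f := Prod.fst) (s := P)
    rw [Int.card_Icc] at h1
    have h3 := le_maxX hc
    have h4 : 0 ≤ maxX P := le_trans hxy.1 h3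
    omega
  -- y bound
  have hy : c.2 ≤ (n:ℤ) - 1 := by
    obtain ⟨c0, hc0, hc0y⟩ := hn.2.2
    have hmaxY := le_mx (Finset.mem_image_of_mem Prod.snd hc)
    set Y := mx (P.image Prod.snd) with hY
    have hYmem : ∃ c' ∈ P, c'.2 = Y := by
      have := mx_mem (P.image Prod.snd) ((hch.1.1).image _)
      simpa [Finset.mem_image] using this
    obtain ⟨c1, hc1, hc1y⟩ := hYmem
    have hsub : Finset.Icc (0:ℤ) Y ⊆ P.image Prod.snd := by
      intro y hy
      simp only [Finset.mem_Icc] at hy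
      obtain ⟨c', hc', hc'y⟩ := path_intermediate Prod.snd
        (fun u v hadj => by have := hexAdj_bound hadj; omega) hc0
        (hch.1.2 c0 hc0 c1 hc1) y (by omega) (by omega)
      exact Finset.mem_image.2 ⟨c', hc', hc'y⟩
    have h1 := Finset.card_le_card hsub
    have h2 := Finset.card_image_le (f := Prod.snd) (s := P)
    rw [Int.card_Icc] at h1
    have h4 : 0 ≤ Y := le_trans hxy.2 hmaxY
    omega
  simp only [Finset.mem_product, Finset.mem_Icc]
  exact ⟨⟨hxy.1, hx⟩, ⟨hxy.2, hy⟩⟩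

instance CNt_finite (n : ℕ) : Finite (CNt n) := by
  set G := (Finset.Icc 0 ((n:ℤ)-1)) ×ˢ (Finset.Icc 0 ((n:ℤ)-1)) with hG
  have : ∀ P : CNt n, P.1 ∈ G.powerset := fun P =>
    Finset.mem_powerset.2 (grid_bound P.1 P.2)
  exact Finite.of_injective (fun P : CNt n => (⟨P.1, this P⟩ : {S // S ∈ G.powerset}))
    (fun P Q h => Subtype.ext (by simpa using congrArg Subtype.val h))

noncomputable instance (n : ℕ) : Fintype (CNt n) := Fintype.ofFinite _

def spanZ (P : Finset Cell) : ℤ := mx (lastCol P) - mn (lastCol P) + 1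

noncomputable def Cc (n : ℕ) : ℤ := (cheesyCount 1 n : ℤ)

noncomputable def Dd (n : ℕ) : ℤ := ∑ P : CNt n, spanZ P.1

lemma Cc_eq (n : ℕ) : Cc n = (Fintype.card (CNt n) : ℤ) := by
  rw [Cc, cheesyCount_eq, Nat.card_eq_fintype_card]

/-- the one-cell polyomino -/
lemma single_cheesy : IsCheesy 1 ({((0:ℤ), (0:ℤ))} : Finset Cell) := by
  apply cheesy_of_colsOK (w := 1)
  have hcol : ∀ x : ℤ, columnYs ({((0:ℤ), (0:ℤ))} : Finset Cell) x =
      if x = 0 then {0} else ∅ := by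
    intro x
    ext y
    rw [mem_columnYs]
    simp only [Finset.mem_singleton, Prod.mk.injEq]
    split
    · rename_i h; subst h; simp
    · rename_i h; simp only [Finset.notMem_empty, iff_false]; tauto
  refine ⟨le_refl 1, ?_, ?_, ?_, ?_, ?_⟩
  · intro x hx; rw [hcol]; rw [if_neg (by omega)]
  · intro x h1 h2
    rw [hcol, if_pos (by omega)]
    exact ⟨0, Finset.mem_singleton_self 0⟩
  · rw [hcol, if_pos rfl]
    exact ⟨0, 0, le_refl 0, by simp⟩
  · intro x h1 h2
    rw [hcol, if_pos (by omega)]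
    exact Or.inl ⟨0, 0, le_refl 0, by simp⟩
  · intro x h1 h2; omega

lemma mem_CNt_one (P : Finset Cell) :
    (IsCheesy 1 P ∧ Normalized P ∧ P.card = 1) ↔ P = {((0:ℤ), (0:ℤ))} := by
  constructor
  · rintro ⟨hch, hn, hcard⟩
    obtain ⟨c, hc⟩ := Finset.card_eq_one.1 hcard
    subst hc
    obtain ⟨c1, hc1, hc1x⟩ := hn.2.1
    obtain ⟨c2, hc2, hc2y⟩ := hn.2.2
    simp only [Finset.mem_singleton] at hc1 hc2
    rw [show c = (0, 0) from Prod.ext (hc1 ▸ hc1x) (hc2 ▸ hc2y)]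
  · rintro rfl
    refine ⟨single_cheesy, ⟨?_, ?_, ?_⟩, rfl⟩
    · intro c hc; simp only [Finset.mem_singleton] at hc; subst hc; exact ⟨le_refl 0, le_refl 0⟩
    · exact ⟨(0,0), Finset.mem_singleton_self _, rfl⟩
    · exact ⟨(0,0), Finset.mem_singleton_self _, rfl⟩

noncomputable instance CNt_one_unique : Unique (CNt 1) where
  default := ⟨{((0:ℤ), (0:ℤ))}, (mem_CNt_one _).2 rfl⟩
  uniq := fun P => Subtype.ext (by
    have := (mem_CNt_one P.1).1 P.2
    simpa using this)

lemma Cc_one : Cc 1 = 1 := by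
  rw [Cc, cheesyCount_eq]
  rw [Nat.card_unique]
  norm_num

lemma lastCol_single : lastCol ({((0:ℤ), (0:ℤ))} : Finset Cell) = {0} := by
  have h1 : maxX ({((0:ℤ), (0:ℤ))} : Finset Cell) = 0 := by
    rw [maxX_eq]
    have : ({((0:ℤ), (0:ℤ))} : Finset Cell).image Prod.fst = {0} := Finset.image_singleton _ _
    rw [this, show ({0} : Finset ℤ) = Finset.Icc 0 0 by simp, mx_Icc le_rfl]
  rw [lastCol, h1]
  ext y
  rw [mem_columnYs]
  simp [Prod.ext_iff]

lemma Dd_one : Dd 1 = 1 := by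
  rw [Dd]
  rw [Fintype.sum_unique]
  show spanZ {((0:ℤ), (0:ℤ))} = 1
  rw [spanZ, lastCol_single,
    show ({0} : Finset ℤ) = Finset.Icc 0 0 by simp, mx_Icc le_rfl, mn_Icc le_rfl]
  norm_num

end Cheesy
/-! ### M5: placements, shifts, extension -/

namespace Cheesy

/-- vertical shift of a polyomino -/
def yshift (t : ℤ) (P : Finset Cell) : Finset Cell := P.image (fun c => (c.1, c.2 + t))

lemma mem_yshift {t : ℤ} {P : Finset Cell} {c : Cell} :
    c ∈ yshift t P ↔ (c.1, c.2 - t) ∈ P := by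
  simp only [yshift, Finset.mem_image]
  constructor
  · rintro ⟨d, hd, rfl⟩; simpa using hd
  · intro h; exact ⟨(c.1, c.2 - t), h, by simp⟩

lemma columnYs_yshift (t : ℤ) (P : Finset Cell) (x : ℤ) :
    columnYs (yshift t P) x = (columnYs P x).image (fun v => v + t) := by
  ext y
  rw [mem_columnYs, mem_yshift, mem_image_add, mem_columnYs]

lemma card_yshift (t : ℤ) (P : Finset Cell) : (yshift t P).card = P.card :=
  Finset.card_image_of_injective _ (fun a b h => by
    have h1 := congrArg Prod.fst h
    have h2 := congrArg Prod.snd h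
    simp only at h1 h2
    exact Prod.ext h1 (by omega))

lemma yshift_yshift (t u : ℤ) (P : Finset Cell) : yshift t (yshift u P) = yshift (t + u) P := by
  ext c
  simp only [mem_yshift]
  rw [show c.2 - t - u = c.2 - (t + u) by ring]

lemma yshift_zero (P : Finset Cell) : yshift 0 P = P := by
  ext c
  rw [mem_yshift]
  simp

lemma image_shift_shift (s : Finset ℤ) (t u : ℤ) :
    (s.image (fun v => v + t)).image (fun v => v + u) = s.image (fun v => v + (t + u)) := by
  ext y
  simp only [mem_image_add]
  rw [show y - u - t = y - (t + u) by ring]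

lemma image_shift_zero (s : Finset ℤ) : s.image (fun v => v + 0) = s := by
  ext y; rw [mem_image_add]; simp

lemma sameComp_shift {s : Finset ℤ} {y z : ℤ} (t : ℤ) (h : SameComp s y z) :
    SameComp (s.image (fun v => v + t)) (y + t) (z + t) := by
  obtain ⟨h1, h2, h3⟩ := h
  refine ⟨mem_image_add.2 (by simpa using h1), mem_image_add.2 (by simpa using h2),
    fun c hc1 hc2 => mem_image_add.2 ?_⟩
  apply h3 (c - t) (by omega) (by omega)

lemma touch_shift {s t' : Finset ℤ} (t : ℤ) (h : Touch s t') :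
    Touch (s.image (fun v => v + t)) (t'.image (fun v => v + t)) := by
  intro y hy
  rw [mem_image_add] at hy
  obtain ⟨z, hz, hcomp, hzs⟩ := h (y - t) hy
  refine ⟨z + t, mem_image_add.2 (by simpa using hz), ?_, ?_⟩
  · have := sameComp_shift t hcomp
    rwa [show y - t + t = y by ring] at this
  · rcases hzs with h | h
    · exact Or.inl (mem_image_add.2 (by simpa using h))
    · exact Or.inr (mem_image_add.2 (by rw [show z + t - 1 - t = z - 1 by ring]; exact h))

lemma colsOK_yshift {P : Finset Cell} {w : ℤ} (t : ℤ) (h : ColsOK (columnYs P) w) :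
    ColsOK (columnYs (yshift t P)) w := by
  obtain ⟨hw, hempty, hne, hfirst, hshape, hconn⟩ := h
  refine ⟨hw, ?_, ?_, ?_, ?_, ?_⟩
  · intro x hx; rw [columnYs_yshift, hempty x hx]; simp
  · intro x h1 h2; rw [columnYs_yshift]; exact (hne x h1 h2).image _
  · rw [columnYs_yshift]; exact isCol1_shift hfirst
  · intro x h1 h2
    rw [columnYs_yshift]
    rcases hshape x h1 h2 with h | h
    · exact Or.inl (isCol1_shift h)
    · exact Or.inr (isCol2_shift h)
  · intro x h1 h2
    rw [columnYs_yshift, columnYs_yshift]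
    exact touch_shift t (hconn x h1 h2)

/-- global minimal ordinate -/
def gmn (P : Finset Cell) : ℤ := mn (P.image Prod.snd)

lemma gmn_norm {P : Finset Cell} (hne : P.Nonempty) (hn : Normalized P) : gmn P = 0 := by
  obtain ⟨c, hc, hcy⟩ := hn.2.2
  have h1 : gmn P ≤ 0 := hcy ▸ mn_le (Finset.mem_image_of_mem Prod.snd hc)
  have h2 := mn_mem (P.image Prod.snd) (hne.image _)
  simp only [Finset.mem_image] at h2
  obtain ⟨d, hd, hdy⟩ := h2
  have := (hn.1 d hd).2
  simp only [gmn] at h1 ⊢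
  omega

lemma gmn_le {P : Finset Cell} {c : Cell} (hc : c ∈ P) : gmn P ≤ c.2 :=
  mn_le (Finset.mem_image_of_mem Prod.snd hc)

lemma gmn_mem {P : Finset Cell} (hne : P.Nonempty) : ∃ c ∈ P, c.2 = gmn P := by
  have h2 := mn_mem (P.image Prod.snd) (hne.image _)
  simp only [Finset.mem_image] at h2
  obtain ⟨d, hd, hdy⟩ := h2
  exact ⟨d, hd, hdy⟩

/-! #### placements -/

def PlcF (B T : ℤ) (κ : ℕ) : Finset (ℤ × ℕ) :=
  (Finset.Icc (B + 1 - κ) T ×ˢ {0}) ∪ (Finset.Icc (B + 1) (T - 1) ×ˢ Finset.Icc 1 (κ - 1))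

lemma mem_PlcF {B T : ℤ} {κ : ℕ} {p : ℤ × ℕ} :
    p ∈ PlcF B T κ ↔ ((p.2 = 0 ∧ B + 1 - κ ≤ p.1 ∧ p.1 ≤ T) ∨
      (1 ≤ p.2 ∧ p.2 ≤ κ - 1 ∧ B + 1 ≤ p.1 ∧ p.1 ≤ T - 1)) := by
  simp only [PlcF, Finset.mem_union, Finset.mem_product, Finset.mem_Icc, Finset.mem_singleton]
  tauto

def realizeCol (κ : ℕ) (p : ℤ × ℕ) : Finset ℤ :=
  if p.2 = 0 then Finset.Icc p.1 (p.1 + κ - 1)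
  else Finset.Icc (p.1 - p.2) (p.1 - p.2 + κ) \ {p.1}

lemma realizeCol_card {κ : ℕ} (hκ : 1 ≤ κ) {p : ℤ × ℕ} (hp2 : p.2 ≤ κ - 1) :
    (realizeCol κ p).card = κ := by
  rw [realizeCol]
  split
  · rw [Int.card_Icc]; omega
  · rename_i h
    rw [card_Icc_diff (by omega) (by omega)]
    omega

lemma realizeCol_shape {κ : ℕ} (hκ : 1 ≤ κ) {p : ℤ × ℕ} (hp2 : p.2 ≤ κ - 1) :
    IsCol1 (realizeCol κ p) ∨ IsCol2 (realizeCol κ p) := by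
  rw [realizeCol]
  split
  · exact Or.inl ⟨p.1, p.1 + κ - 1, by omega, rfl⟩
  · rename_i h
    exact Or.inr ⟨p.1 - p.2, p.1, p.1 - p.2 + κ, by omega, by omega, rfl⟩

lemma realizeCol_mn {κ : ℕ} (hκ : 1 ≤ κ) {p : ℤ × ℕ} (hp2 : p.2 ≤ κ - 1) :
    mn (realizeCol κ p) = if p.2 = 0 then p.1 else p.1 - p.2 := by
  rw [realizeCol]
  split
  · exact mn_Icc (by omega)
  · rename_i h
    exact mn_Icc_diff (by omega) (by omega)

lemma realizeCol_mx {κ : ℕ} (hκ : 1 ≤ κ) {p : ℤ × ℕ} (hp2 : p.2 ≤ κ - 1) :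
    mx (realizeCol κ p) = if p.2 = 0 then p.1 + κ - 1 else p.1 - p.2 + κ := by
  rw [realizeCol]
  split
  · exact mx_Icc (by omega)
  · rename_i h
    exact mx_Icc_diff (by omega) (by omega)

/-- validity of a placement gives Touch -/
lemma touch_realizeCol {s : Finset ℤ} (hs : IsCol1 s ∨ IsCol2 s) {κ : ℕ} (hκ : 1 ≤ κ)
    {p : ℤ × ℕ} (hp : p ∈ PlcF (mn s) (mx s + 1) κ) : Touch s (realizeCol κ p) := by
  rw [mem_PlcF] at hp
  rw [realizeCol]
  rcases hp with ⟨h0, h1, h2⟩ | ⟨h0, h1, h2, h3⟩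
  · rw [if_pos h0]
    rw [touch_col1_iff hs (by omega) rfl]
    omega
  · rw [if_neg (by omega)]
    rw [touch_col2_iff hs (by omega) (by omega) rfl]
    omega

/-- conversely, Touch gives validity -/
lemma plc_of_touch_col1 {s : Finset ℤ} (hs : IsCol1 s ∨ IsCol2 s) {a b : ℤ} (hab : a ≤ b)
    {t : Finset ℤ} (ht : t = Finset.Icc a b) (htouch : Touch s t) :
    ((a, 0) : ℤ × ℕ) ∈ PlcF (mn s) (mx s + 1) (b - a + 1).toNat := by
  rw [touch_col1_iff hs hab ht] at htouch
  rw [mem_PlcF]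
  left
  refine ⟨rfl, ?_, ?_⟩ <;> simp only [] <;> omega

lemma plc_of_touch_col2 {s : Finset ℤ} (hs : IsCol1 s ∨ IsCol2 s) {a g b : ℤ}
    (hag : a < g) (hgb : g < b) {t : Finset ℤ} (ht : t = Finset.Icc a b \ {g})
    (htouch : Touch s t) :
    ((g, (g - a).toNat) : ℤ × ℕ) ∈ PlcF (mn s) (mx s + 1) (b - a).toNat := by
  rw [touch_col2_iff hs hag hgb ht] at htouch
  rw [mem_PlcF]
  right
  refine ⟨by omega, by omega, by omega, by omega⟩

end Cheesy
/-! ### M6a: extension of a polyomino by a new last column -/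

namespace Cheesy

lemma maxX_eq_of {P : Finset Cell} {v : ℤ} (h1 : ∀ c ∈ P, c.1 ≤ v)
    (h2 : ∃ c ∈ P, c.1 = v) : maxX P = v := by
  obtain ⟨c, hc, hcv⟩ := h2
  have ha : v ≤ maxX P := hcv ▸ le_maxX hc
  have hb : ∃ d ∈ P, d.1 = maxX P := maxX_mem ⟨c, hc⟩
  obtain ⟨d, hd, hdv⟩ := hb
  have := h1 d hd
  omega

lemma columnYs_union (P R : Finset Cell) (x : ℤ) :
    columnYs (P ∪ R) x = columnYs P x ∪ columnYs R x := by
  ext y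
  simp only [mem_columnYs, Finset.mem_union]

lemma columnYs_vline (s : Finset ℤ) (W x : ℤ) :
    columnYs (s.image (fun y => (W, y))) x = if x = W then s else ∅ := by
  ext y
  rw [mem_columnYs]
  simp only [Finset.mem_image, Prod.mk.injEq]
  split
  · rename_i h; subst h
    constructor
    · rintro ⟨z, hz, _, rfl⟩; exact hz
    · intro h; exact ⟨y, h, rfl, rfl⟩
  · rename_i h
    simp only [Finset.notMem_empty, iff_false]
    rintro ⟨z, hz, h1, rfl⟩
    exact h h1.symm

lemma card_vline (s : Finset ℤ) (W : ℤ) : (s.image (fun y => (W, y))).card = s.card :=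
  Finset.card_image_of_injective _ (fun a b h => (Prod.mk.injEq _ _ _ _ ▸ h : _ ∧ _).2)

section Extension

variable {m : ℕ} {Q : Finset Cell} (hQ : IsCheesy 1 Q ∧ Normalized Q ∧ Q.card = m)
  {κ : ℕ} (hκ : 1 ≤ κ) {p : ℤ × ℕ}
  (hp : p ∈ PlcF (mn (lastCol Q)) (mx (lastCol Q) + 1) κ)

def extP (Q : Finset Cell) (κ : ℕ) (p : ℤ × ℕ) : Finset Cell :=
  yshift (max 0 (-(mn (realizeCol κ p))))
    (Q ∪ (realizeCol κ p).image (fun y => (maxX Q + 1, y)))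

lemma hp2_of (hp : p ∈ PlcF (mn (lastCol Q)) (mx (lastCol Q) + 1) κ) : p.2 ≤ κ - 1 := by
  rw [mem_PlcF] at hp
  omega

include hQ in
lemma maxX_nonneg : 0 ≤ maxX Q := by
  obtain ⟨c0, hc0, hc0x⟩ := hQ.2.1.2.1
  exact hc0x ▸ le_maxX hc0

include hQ in
lemma colsQ : ColsOK (columnYs Q) (maxX Q + 1) := colsOK_of_cheesy hQ.1 hQ.2.1

include hQ in
lemma lastCol_shape : IsCol1 (lastCol Q) ∨ IsCol2 (lastCol Q) :=
  (colsQ hQ).shape (maxX Q) (maxX_nonneg hQ) (by omega)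

include hQ in
lemma lastCol_nonempty : (lastCol Q).Nonempty :=
  (colsQ hQ).nonemp (maxX Q) (maxX_nonneg hQ) (by omega)

include hQ hκ hp in
lemma columnYs_extP (x : ℤ) :
    columnYs (extP Q κ p) x =
      (if x = maxX Q + 1 then realizeCol κ p else columnYs Q x).image
        (fun v => v + max 0 (-(mn (realizeCol κ p)))) := by
  rw [extP, columnYs_yshift, columnYs_union, columnYs_vline]
  congr 1
  by_cases hx : x = maxX Q + 1
  · rw [if_pos hx, if_pos hx, hx, (colsQ hQ).empt (maxX Q + 1) (by omega)]
    exact Finset.empty_union _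
  · rw [if_neg hx, if_neg hx, Finset.union_empty]

include hQ hκ hp in
lemma colsOK_extP : ColsOK (columnYs (extP Q κ p)) (maxX Q + 2) := by
  have hcols := colsQ hQ
  have hM := maxX_nonneg hQ
  have hp2 := hp2_of (Q := Q) (κ := κ) hp
  have hrc_ne : (realizeCol κ p).Nonempty := by
    rw [← Finset.card_pos, realizeCol_card hκ hp2]; omega
  set t := max 0 (-(mn (realizeCol κ p))) with ht
  refine ⟨by omega, ?_, ?_, ?_, ?_, ?_⟩
  · intro x hx
    rw [columnYs_extP hQ hκ hp, if_neg (by omega), hcols.empt x (by omega)]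
    simp
  · intro x h1 h2
    rw [columnYs_extP hQ hκ hp]
    by_cases hx : x = maxX Q + 1
    · rw [if_pos hx]; exact hrc_ne.image _
    · rw [if_neg hx]; exact (hcols.nonemp x h1 (by omega)).image _
  · rw [columnYs_extP hQ hκ hp, if_neg (by omega)]
    exact isCol1_shift hcols.first
  · intro x h1 h2
    rw [columnYs_extP hQ hκ hp]
    by_cases hx : x = maxX Q + 1
    · rw [if_pos hx]
      rcases realizeCol_shape hκ hp2 (p := p) with h | h
      · exact Or.inl (isCol1_shift h)
      · exact Or.inr (isCol2_shift h)
    · rw [if_neg hx]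
      rcases hcols.shape x h1 (by omega) with h | h
      · exact Or.inl (isCol1_shift h)
      · exact Or.inr (isCol2_shift h)
  · intro x h1 h2
    rw [columnYs_extP hQ hκ hp, columnYs_extP hQ hκ hp]
    by_cases hx : x + 1 = maxX Q + 1
    · rw [if_pos hx, if_neg (by omega)]
      have hxM : x = maxX Q := by omega
      subst hxM
      exact touch_shift t (touch_realizeCol (lastCol_shape hQ) hκ hp)
    · rw [if_neg hx, if_neg (by omega)]
      exact touch_shift t (hcols.conn x h1 (by omega))

include hQ hκ hp in
lemma cheesy_extP : IsCheesy 1 (extP Q κ p) :=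
  cheesy_of_colsOK (colsOK_extP hQ hκ hp)

include hQ hκ hp in
lemma normalized_extP : Normalized (extP Q κ p) := by
  have hp2 := hp2_of (Q := Q) (κ := κ) hp
  have hrc_ne : (realizeCol κ p).Nonempty := by
    rw [← Finset.card_pos, realizeCol_card hκ hp2]; omega
  set t := max 0 (-(mn (realizeCol κ p))) with ht
  have htnn : 0 ≤ t := le_max_left _ _
  refine ⟨?_, ?_, ?_⟩
  · intro c hc
    rw [extP, mem_yshift, Finset.mem_union] at hc
    rcases hc with hc | hc
    · have := hQ.2.1.1 _ hc
      simp only at this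
      exact ⟨this.1, by omega⟩
    · simp only [Finset.mem_image, Prod.mk.injEq] at hc
      obtain ⟨z, hz, hz1, hz2⟩ := hc
      have hzmn := mn_le hz
      have := maxX_nonneg hQ
      constructor
      · omega
      · have : 0 ≤ mn (realizeCol κ p) + t := by omega
        omega
  · obtain ⟨c0, hc0, hc0x⟩ := hQ.2.1.2.1
    refine ⟨(c0.1, c0.2 + t), ?_, hc0x⟩
    rw [extP, mem_yshift, Finset.mem_union]
    simp only [← ht, add_sub_cancel_right, Prod.mk.eta]
    exact Or.inl hc0
  · by_cases hmn : mn (realizeCol κ p) < 0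
    · refine ⟨(maxX Q + 1, mn (realizeCol κ p) + t), ?_, by omega⟩
      rw [extP, mem_yshift, Finset.mem_union]
      simp only [← ht, add_sub_cancel_right]
      exact Or.inr (Finset.mem_image.2 ⟨mn (realizeCol κ p), mn_mem _ hrc_ne, rfl⟩)
    · obtain ⟨c0, hc0, hc0y⟩ := hQ.2.1.2.2
      refine ⟨(c0.1, c0.2 + t), ?_, by omega⟩
      rw [extP, mem_yshift, Finset.mem_union]
      simp only [← ht, add_sub_cancel_right, Prod.mk.eta]
      exact Or.inl hc0

include hQ hκ hp in
lemma card_extP : (extP Q κ p).card = m + κ := by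
  have hp2 := hp2_of (Q := Q) (κ := κ) hp
  rw [extP, card_yshift, Finset.card_union_of_disjoint, card_vline,
    realizeCol_card hκ hp2, hQ.2.2]
  rw [Finset.disjoint_left]
  intro c hc hc2
  have h1 := le_maxX hc
  simp only [Finset.mem_image, Prod.mk.injEq] at hc2
  obtain ⟨z, hz, hz1, hz2⟩ := hc2
  omega

include hQ hκ hp in
lemma maxX_extP : maxX (extP Q κ p) = maxX Q + 1 := by
  have hp2 := hp2_of (Q := Q) (κ := κ) hp
  have hrc_ne : (realizeCol κ p).Nonempty := by
    rw [← Finset.card_pos, realizeCol_card hκ hp2]; omega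
  apply maxX_eq_of
  · intro c hc
    rw [extP, mem_yshift, Finset.mem_union] at hc
    rcases hc with hc | hc
    · have := le_maxX hc; simp only at this; omega
    · simp only [Finset.mem_image, Prod.mk.injEq] at hc
      obtain ⟨z, hz, hz1, hz2⟩ := hc
      omega
  · obtain ⟨z, hz⟩ := hrc_ne
    refine ⟨(maxX Q + 1, z + max 0 (-(mn (realizeCol κ p)))), ?_, rfl⟩
    rw [extP, mem_yshift, Finset.mem_union]
    simp only [add_sub_cancel_right]
    exact Or.inr (Finset.mem_image.2 ⟨z, hz, rfl⟩)

include hQ hκ hp in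
lemma lastCol_extP : lastCol (extP Q κ p) =
    (realizeCol κ p).image (fun v => v + max 0 (-(mn (realizeCol κ p)))) := by
  rw [lastCol, maxX_extP hQ hκ hp, columnYs_extP hQ hκ hp, if_pos rfl]

include hQ hκ hp in
lemma spanZ_extP : spanZ (extP Q κ p) = (κ : ℤ) + (if p.2 = 0 then 0 else 1) := by
  have hp2 := hp2_of (Q := Q) (κ := κ) hp
  have hrc_ne : (realizeCol κ p).Nonempty := by
    rw [← Finset.card_pos, realizeCol_card hκ hp2]; omega
  rw [spanZ, lastCol_extP hQ hκ hp, mx_shift hrc_ne _, mn_shift hrc_ne _,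
    realizeCol_mn hκ hp2, realizeCol_mx hκ hp2]
  split <;> push_cast <;> ring

end Extension

end Cheesy
/-! ### M6b: decomposition by removing the last column -/

namespace Cheesy

lemma gapCells_Icc {a b : ℤ} (h : a ≤ b) : gapCells (Finset.Icc a b) = ∅ := by
  rw [gapCells_def, mn_Icc h, mx_Icc h, Finset.sdiff_self]

lemma mn_singleton (z : ℤ) : mn ({z} : Finset ℤ) = z := by
  rw [show ({z} : Finset ℤ) = Finset.Icc z z by simp, mn_Icc le_rfl]

lemma card_columnYs (P : Finset Cell) (x : ℤ) :
    (columnYs P x).card = (P.filter (fun c => c.1 = x)).card := by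
  rw [columnYs]
  apply Finset.card_image_of_injOn
  intro a ha b hb h
  simp only [Finset.coe_filter, Set.mem_setOf_eq] at ha hb
  exact Prod.ext (ha.2.trans hb.2.symm) h

lemma image_snd_yshift (t : ℤ) (R : Finset Cell) :
    (yshift t R).image Prod.snd = (R.image Prod.snd).image (fun v => v + t) := by
  ext y
  simp only [Finset.mem_image, mem_yshift]
  constructor
  · rintro ⟨c, hc, rfl⟩
    exact ⟨c.2 - t, ⟨(c.1, c.2 - t), hc, rfl⟩, by ring⟩
  · rintro ⟨v, ⟨c, hc, rfl⟩, rfl⟩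
    exact ⟨(c.1, c.2 + t), by simpa using hc, rfl⟩

lemma gmn_yshift {R : Finset Cell} (h : R.Nonempty) (t : ℤ) :
    gmn (yshift t R) = gmn R + t := by
  rw [gmn, image_snd_yshift, mn_shift (h.image _) t]
  rfl

lemma maxX_yshift (t : ℤ) (R : Finset Cell) : maxX (yshift t R) = maxX R := by
  rw [maxX_eq, maxX_eq]
  congr 1
  ext x
  simp only [Finset.mem_image, mem_yshift]
  constructor
  · rintro ⟨c, hc, rfl⟩; exact ⟨(c.1, c.2 - t), hc, rfl⟩
  · rintro ⟨c, hc, rfl⟩; exact ⟨(c.1, c.2 + t), by simpa using hc, rfl⟩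

lemma yshift_union (t : ℤ) (A B : Finset Cell) :
    yshift t (A ∪ B) = yshift t A ∪ yshift t B := Finset.image_union _ _

lemma filter_yshift (t : ℤ) (R : Finset Cell) (v : ℤ) :
    (yshift t R).filter (fun c => c.1 ≠ v) = yshift t (R.filter (fun c => c.1 ≠ v)) := by
  ext c
  simp only [Finset.mem_filter, mem_yshift]

/-! #### the decomposition maps -/

def restP (P : Finset Cell) : Finset Cell := P.filter (fun c => c.1 ≠ maxX P)
def tof (P : Finset Cell) : ℤ := gmn (restP P)
def Qof (P : Finset Cell) : Finset Cell := yshift (-(tof P)) (restP P)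
def Lof (P : Finset Cell) : Finset ℤ := (lastCol P).image (fun v => v + (-(tof P)))
def pof (P : Finset Cell) : ℤ × ℕ :=
  if (gapCells (Lof P)).Nonempty then
    (mn (gapCells (Lof P)), (mn (gapCells (Lof P)) - mn (Lof P)).toNat)
  else (mn (Lof P), 0)
def κof (P : Finset Cell) : ℕ := (lastCol P).card

lemma P_eq_rest_union_last (P : Finset Cell) :
    P = restP P ∪ (lastCol P).image (fun y => (maxX P, y)) := by
  ext c
  simp only [restP, Finset.mem_union, Finset.mem_filter, Finset.mem_image,
    Prod.mk.injEq]
  constructor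
  · intro hc
    by_cases hx : c.1 = maxX P
    · exact Or.inr ⟨c.2, mem_columnYs.2 (by rwa [← hx, Prod.mk.eta]), Prod.ext hx.symm rfl⟩
    · exact Or.inl ⟨hc, hx⟩
  · rintro (⟨hc, _⟩ | ⟨z, hz, h12⟩)
    · exact hc
    · rw [lastCol, mem_columnYs] at hz
      rw [← h12]
      exact hz

section Decomp

variable {n : ℕ} {P : Finset Cell} (hP : IsCheesy 1 P ∧ Normalized P ∧ P.card = n)
  (hmax : 1 ≤ maxX P)

include hP in
lemma colsP : ColsOK (columnYs P) (maxX P + 1) := colsOK_of_cheesy hP.1 hP.2.1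

lemma columnYs_restP (P : Finset Cell) (x : ℤ) :
    columnYs (restP P) x = if x = maxX P then ∅ else columnYs P x := by
  ext y
  simp only [mem_columnYs, restP, Finset.mem_filter]
  split
  · rename_i h; subst h; simp
  · rename_i h; rw [mem_columnYs]; simp [h]

include hP hmax in
lemma maxX_restP : maxX (restP P) = maxX P - 1 := by
  apply maxX_eq_of
  · intro c hc
    simp only [restP, Finset.mem_filter] at hc
    have := le_maxX hc.1
    have h2 := hc.2
    omega
  · obtain ⟨y, hy⟩ := (colsP hP).nonemp (maxX P - 1) (by omega) (by omega)
    rw [mem_columnYs] at hy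
    exact ⟨(maxX P - 1, y), by
      simp only [restP, Finset.mem_filter]
      exact ⟨hy, by show maxX P - 1 ≠ maxX P; omega⟩, rfl⟩

include hP hmax in
lemma colsOK_restP : ColsOK (columnYs (restP P)) (maxX P) := by
  have hc := colsP hP
  refine ⟨hmax, ?_, ?_, ?_, ?_, ?_⟩
  · intro x hx
    rw [columnYs_restP]
    split
    · rfl
    · exact hc.empt x (by omega)
  · intro x h1 h2
    rw [columnYs_restP, if_neg (by omega)]
    exact hc.nonemp x h1 (by omega)
  · rw [columnYs_restP, if_neg (by omega)]
    exact hc.first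
  · intro x h1 h2
    rw [columnYs_restP, if_neg (by omega)]
    exact hc.shape x h1 (by omega)
  · intro x h1 h2
    rw [columnYs_restP, if_neg (by omega), columnYs_restP, if_neg (by omega)]
    exact hc.conn x h1 (by omega)

include hP hmax in
lemma restP_nonempty : (restP P).Nonempty := by
  obtain ⟨y, hy⟩ := (colsP hP).nonemp 0 le_rfl (by omega)
  rw [mem_columnYs] at hy
  exact ⟨(0, y), by
    simp only [restP, Finset.mem_filter]
    exact ⟨hy, by show (0:ℤ) ≠ maxX P; omega⟩⟩

include hP hmax in
lemma tof_nonneg : 0 ≤ tof P := by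
  obtain ⟨c, hc, hcy⟩ := gmn_mem (restP_nonempty hP hmax)
  have : c ∈ P := (Finset.mem_filter.1 hc).1
  have := (hP.2.1.1 c this).2
  rw [tof]
  omega

include hP hmax in
lemma colsOK_Qof : ColsOK (columnYs (Qof P)) (maxX P) :=
  colsOK_yshift _ (colsOK_restP hP hmax)

include hP hmax in
lemma cheesy_Qof : IsCheesy 1 (Qof P) := cheesy_of_colsOK (colsOK_Qof hP hmax)

include hP hmax in
lemma maxX_Qof : maxX (Qof P) = maxX P - 1 := by
  rw [Qof, maxX_yshift, maxX_restP hP hmax]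

include hP hmax in
lemma normalized_Qof : Normalized (Qof P) := by
  have ht := tof_nonneg hP hmax
  refine ⟨?_, ?_, ?_⟩
  · intro c hc
    rw [Qof, mem_yshift] at hc
    have h1 := (hP.2.1.1 _ (Finset.mem_filter.1 hc).1).1
    have h2 : tof P ≤ c.2 + tof P := by
      have := gmn_le (P := restP P) hc
      simp only [tof] at *
      omega
    simp only at h1
    exact ⟨h1, by omega⟩
  · obtain ⟨y, hy⟩ := (colsP hP).nonemp 0 le_rfl (by omega)
    rw [mem_columnYs] at hy
    refine ⟨(0, y - tof P), ?_, rfl⟩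
    rw [Qof, mem_yshift]
    simp only [sub_sub_cancel, sub_neg_eq_add, sub_add_cancel]
    refine Finset.mem_filter.2 ⟨?_, by show (0:ℤ) ≠ maxX P; omega⟩
    convert hy using 2 <;> ring
  · obtain ⟨c, hc, hcy⟩ := gmn_mem (restP_nonempty hP hmax)
    refine ⟨(c.1, c.2 - tof P), ?_, by simp only []; rw [hcy]; simp [tof]⟩
    rw [Qof, mem_yshift]
    simp only [sub_neg_eq_add, sub_add_cancel]
    rwa [Prod.mk.eta]

include hP hmax in
lemma card_Qof : (Qof P).card = n - κof P := by
  rw [Qof, card_yshift]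
  have h1 : (P.filter (fun c => c.1 = maxX P)).card = κof P := by
    rw [κof, lastCol, card_columnYs]
  have h2 : (P.filter (fun c => c.1 = maxX P)).card
      + (P.filter (fun c => c.1 ≠ maxX P)).card = P.card := by
    have := Finset.card_filter_add_card_filter_not
      (s := P) (p := fun c => c.1 = maxX P)
    simpa using this
  have h4 := hP.2.2
  rw [restP]
  omega

include hP hmax in
lemma κof_pos : 1 ≤ κof P := by
  rw [κof]
  exact Finset.card_pos.2 (lastCol_nonempty hP)

include hP hmax in
lemma lastCol_Qof : lastCol (Qof P) =
    (columnYs P (maxX P - 1)).image (fun v => v + (-(tof P))) := by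
  rw [lastCol, maxX_Qof hP hmax, Qof, columnYs_yshift, columnYs_restP, if_neg (by omega)]

include hP hmax in
lemma touch_last (hP : IsCheesy 1 P ∧ Normalized P ∧ P.card = n) :
    Touch (columnYs P (maxX P - 1)) (lastCol P) := by
  have := (colsP hP).conn (maxX P - 1) (by omega) (by omega)
  rwa [show maxX P - 1 + 1 = maxX P by ring] at this

end Decomp

end Cheesy
/-! ### M6c: decode and round-trips -/

namespace Cheesy

lemma Icc_diff_image_add {a g b t : ℤ} :
    ((Finset.Icc a b \ {g}).image (fun v => v + t)) = Finset.Icc (a+t) (b+t) \ {g+t} := by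
  ext y
  rw [mem_image_add]
  simp only [Finset.mem_sdiff, Finset.mem_Icc, Finset.mem_singleton]
  omega

lemma vline_shift (s : Finset ℤ) (W t : ℤ) :
    (s.image (fun v => v + t)).image (fun y => (W, y)) = yshift t (s.image (fun y => (W, y))) := by
  ext c
  constructor
  · intro hc
    obtain ⟨v, hv, rfl⟩ := Finset.mem_image.1 hc
    rw [mem_image_add] at hv
    rw [mem_yshift]
    exact Finset.mem_image.2 ⟨v - t, hv, by rw [Prod.mk.injEq]; exact ⟨rfl, by ring⟩⟩
  · intro hc
    rw [mem_yshift] at hc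
    obtain ⟨z, hz, hz2⟩ := Finset.mem_image.1 hc
    have h1 : W = c.1 := congrArg Prod.fst hz2
    have h2 : z = c.2 - t := congrArg Prod.snd hz2
    exact Finset.mem_image.2 ⟨c.2, mem_image_add.2 (h2 ▸ hz), Prod.ext h1 rfl⟩

section Decomp2

variable {n : ℕ} {P : Finset Cell} (hP : IsCheesy 1 P ∧ Normalized P ∧ P.card = n)
  (hmax : 1 ≤ maxX P)

include hP in
lemma lastColP_shape : IsCol1 (lastCol P) ∨ IsCol2 (lastCol P) :=
  lastCol_shape hP

include hP hmax in
lemma lastCol_Qof_shape : IsCol1 (lastCol (Qof P)) ∨ IsCol2 (lastCol (Qof P)) := by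
  rw [lastCol_Qof hP hmax]
  rcases (colsP hP).shape (maxX P - 1) (by omega) (by omega) with h | h
  · exact Or.inl (isCol1_shift h)
  · exact Or.inr (isCol2_shift h)

include hP hmax in
lemma touch_LQ : Touch (lastCol (Qof P)) (Lof P) := by
  rw [lastCol_Qof hP hmax, Lof]
  exact touch_shift _ (touch_last hP hmax hP)

include hP hmax in
lemma decode_ok :
    pof P ∈ PlcF (mn (lastCol (Qof P))) (mx (lastCol (Qof P)) + 1) (κof P) ∧
    realizeCol (κof P) (pof P) = Lof P := by
  have htouch := touch_LQ hP hmax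
  have hshape := lastCol_Qof_shape hP hmax
  rcases lastColP_shape hP with ⟨a, b, hab, heq⟩ | ⟨a, g, b, hag, hgb, heq⟩
  · have hL : Lof P = Finset.Icc (a + -(tof P)) (b + -(tof P)) := by
      rw [Lof, heq, Icc_image_add]
    have hκ : κof P = (b - a + 1).toNat := by
      rw [κof, heq, Int.card_Icc]
      omega
    have hgap : gapCells (Lof P) = ∅ := by rw [hL]; exact gapCells_Icc (by omega)
    have hpof : pof P = (a + -(tof P), 0) := by
      rw [pof, if_neg (by rw [hgap]; simp), hL, mn_Icc (by omega)]
    constructor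
    · rw [hpof, hκ]
      have hmem := plc_of_touch_col1 hshape (by omega : a + -(tof P) ≤ b + -(tof P))
        hL htouch
      rwa [show (b + -(tof P) - (a + -(tof P)) + 1).toNat = (b - a + 1).toNat by omega] at hmem
    · rw [hpof, hκ, realizeCol, if_pos rfl, hL]
      congr 1
      simp only []
      omega
  · have hL : Lof P = Finset.Icc (a + -(tof P)) (b + -(tof P)) \ {g + -(tof P)} := by
      rw [Lof, heq, Icc_diff_image_add]
    have hκ : κof P = (b - a).toNat := by
      rw [κof, heq, card_Icc_diff hag hgb]
    have hgap : gapCells (Lof P) = {g + -(tof P)} := by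
      rw [hL]; exact gapCells_Icc_diff (by omega) (by omega)
    have hpof : pof P = (g + -(tof P), (g - a).toNat) := by
      rw [pof, if_pos (by rw [hgap]; simp), hgap, mn_singleton, hL,
        mn_Icc_diff (by omega) (by omega)]
      congr 1
      omega
    constructor
    · rw [hpof, hκ]
      have hmem := plc_of_touch_col2 hshape
        (by omega : a + -(tof P) < g + -(tof P)) (by omega : g + -(tof P) < b + -(tof P))
        hL htouch
      rwa [show (g + -(tof P) - (a + -(tof P))).toNat = (g - a).toNat by omega,
        show (b + -(tof P) - (a + -(tof P))).toNat = (b - a).toNat by omega] at hmem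
    · rw [hpof, hκ, realizeCol, if_neg (by simp only []; omega), hL]
      simp only []
      congr 2 <;> omega

include hP in
lemma mn_lastCol_nonneg : 0 ≤ mn (lastCol P) := by
  have hne := lastCol_nonempty hP
  have := mn_mem _ hne
  rw [lastCol, mem_columnYs] at this
  exact (hP.2.1.1 _ this).2

include hP hmax in
lemma t_or_mn : tof P = 0 ∨ mn (lastCol P) = 0 := by
  obtain ⟨c, hc, hcy⟩ := hP.2.1.2.2
  by_cases hx : c.1 = maxX P
  · right
    have : c.2 ∈ lastCol P := by
      rw [lastCol, mem_columnYs, ← hx, Prod.mk.eta]; exact hc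
    have h1 := mn_le this
    have h2 := mn_lastCol_nonneg hP
    omega
  · left
    have : c ∈ restP P := Finset.mem_filter.2 ⟨hc, hx⟩
    have h1 := gmn_le (P := restP P) this
    have h2 := tof_nonneg hP hmax
    simp only [tof] at *
    omega

include hP hmax in
lemma tmax_eq : max 0 (-(mn (realizeCol (κof P) (pof P)))) = tof P := by
  rw [(decode_ok hP hmax).2]
  have h1 : mn (Lof P) = mn (lastCol P) + -(tof P) := by
    rw [Lof, mn_shift (lastCol_nonempty hP)]
  rw [h1]
  have h2 := mn_lastCol_nonneg hP
  have h3 := tof_nonneg hP hmax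
  rcases t_or_mn hP hmax with h | h <;> omega

include hP hmax in
lemma extP_decomp : extP (Qof P) (κof P) (pof P) = P := by
  rw [extP, tmax_eq hP hmax, (decode_ok hP hmax).2]
  rw [show maxX (Qof P) + 1 = maxX P by rw [maxX_Qof hP hmax]; ring]
  rw [Lof, vline_shift]
  rw [Qof, ← yshift_union, yshift_yshift]
  rw [show tof P + -(tof P) = 0 by ring, yshift_zero]
  exact (P_eq_rest_union_last P).symm

end Decomp2

section Ext2

variable {m : ℕ} {Q : Finset Cell} (hQ : IsCheesy 1 Q ∧ Normalized Q ∧ Q.card = m)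
  {κ : ℕ} (hκ : 1 ≤ κ) {p : ℤ × ℕ}
  (hp : p ∈ PlcF (mn (lastCol Q)) (mx (lastCol Q) + 1) κ)

include hQ hκ hp in
lemma restP_extP : restP (extP Q κ p) =
    yshift (max 0 (-(mn (realizeCol κ p)))) Q := by
  rw [restP, maxX_extP hQ hκ hp, extP, filter_yshift]
  congr 1
  rw [Finset.filter_union]
  have h1 : Q.filter (fun c => c.1 ≠ maxX Q + 1) = Q := by
    apply Finset.filter_true_of_mem
    intro c hc
    have := le_maxX hc
    omega
  have h2 : ((realizeCol κ p).image (fun y => (maxX Q + 1, y))).filter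
      (fun c => c.1 ≠ maxX Q + 1) = ∅ := by
    apply Finset.filter_false_of_mem
    intro c hc
    simp only [Finset.mem_image, Prod.mk.injEq] at hc
    obtain ⟨z, hz, h1', h2'⟩ := hc
    simp only [ne_eq, not_not]
  rw [h1, h2, Finset.union_empty]

include hQ hκ hp in
lemma tof_extP : tof (extP Q κ p) = max 0 (-(mn (realizeCol κ p))) := by
  rw [tof, restP_extP hQ hκ hp, gmn_yshift hQ.1.1.1, gmn_norm hQ.1.1.1 hQ.2.1]
  ring

include hQ hκ hp in
lemma Qof_extP : Qof (extP Q κ p) = Q := by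
  rw [Qof, restP_extP hQ hκ hp, tof_extP hQ hκ hp, yshift_yshift]
  rw [show -(max 0 (-(mn (realizeCol κ p)))) + max 0 (-(mn (realizeCol κ p))) = 0 by ring,
    yshift_zero]

include hQ hκ hp in
lemma κof_extP : κof (extP Q κ p) = κ := by
  rw [κof, lastCol_extP hQ hκ hp,
    Finset.card_image_of_injective _ (fun a b h => by omega),
    realizeCol_card hκ (hp2_of hp)]

include hQ hκ hp in
lemma Lof_extP : Lof (extP Q κ p) = realizeCol κ p := by
  rw [Lof, lastCol_extP hQ hκ hp, tof_extP hQ hκ hp, image_shift_shift,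
    show max 0 (-(mn (realizeCol κ p))) + -(max 0 (-(mn (realizeCol κ p)))) = 0 by ring,
    image_shift_zero]

include hQ hκ hp in
lemma pof_extP : pof (extP Q κ p) = p := by
  have hp' := hp
  rw [mem_PlcF] at hp'
  rw [pof, Lof_extP hQ hκ hp]
  rcases hp' with ⟨h0, h1, h2⟩ | ⟨h0, h1, h2, h3⟩
  · have hreal : realizeCol κ p = Finset.Icc p.1 (p.1 + (κ:ℤ) - 1) := by
      rw [realizeCol, if_pos h0]
    rw [hreal, if_neg (by rw [gapCells_Icc (by omega)]; simp), mn_Icc (by omega)]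
    exact Prod.ext rfl h0.symm
  · have hreal : realizeCol κ p = Finset.Icc (p.1 - p.2) (p.1 - p.2 + κ) \ {p.1} := by
      rw [realizeCol, if_neg (by omega)]
    have hgap : gapCells (Finset.Icc (p.1 - (p.2:ℤ)) (p.1 - p.2 + κ) \ {p.1}) = {p.1} :=
      gapCells_Icc_diff (by omega) (by omega)
    rw [hreal, if_pos (by rw [hgap]; simp), hgap, mn_singleton,
      mn_Icc_diff (by omega) (by omega)]
    refine Prod.ext rfl ?_
    show (p.1 - (p.1 - (p.2:ℤ))).toNat = p.2
    omega

end Ext2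

end Cheesy
/-! ### M7a: single column polyomino; sums over placements -/

namespace Cheesy

def singlePoly (n : ℕ) : Finset Cell :=
  (Finset.Icc (0:ℤ) ((n:ℤ) - 1)).image (fun y => ((0:ℤ), y))

lemma columnYs_singlePoly (n : ℕ) (x : ℤ) :
    columnYs (singlePoly n) x = if x = 0 then Finset.Icc (0:ℤ) ((n:ℤ) - 1) else ∅ :=
  columnYs_vline _ _ _

lemma singlePoly_mem_CNt {n : ℕ} (hn : 1 ≤ n) :
    IsCheesy 1 (singlePoly n) ∧ Normalized (singlePoly n) ∧ (singlePoly n).card = n := by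
  have hcard : (singlePoly n).card = n := by
    rw [singlePoly, card_vline, Int.card_Icc]
    omega
  have hcols : ColsOK (columnYs (singlePoly n)) 1 := by
    refine ⟨le_refl 1, ?_, ?_, ?_, ?_, ?_⟩
    · intro x hx; rw [columnYs_singlePoly, if_neg (by omega)]
    · intro x h1 h2
      rw [columnYs_singlePoly, if_pos (by omega)]
      exact Finset.nonempty_Icc.2 (by omega)
    · rw [columnYs_singlePoly, if_pos rfl]
      exact ⟨0, (n:ℤ) - 1, by omega, rfl⟩
    · intro x h1 h2
      rw [columnYs_singlePoly, if_pos (by omega)]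
      exact Or.inl ⟨0, (n:ℤ) - 1, by omega, rfl⟩
    · intro x h1 h2; omega
  refine ⟨cheesy_of_colsOK hcols, ⟨?_, ?_, ?_⟩, hcard⟩
  · intro c hc
    simp only [singlePoly, Finset.mem_image, Finset.mem_Icc] at hc
    obtain ⟨y, hy, rfl⟩ := hc
    exact ⟨le_refl 0, hy.1⟩
  · exact ⟨(0, 0), by
      simp only [singlePoly, Finset.mem_image, Finset.mem_Icc]
      exact ⟨0, ⟨le_refl 0, by omega⟩, rfl⟩, rfl⟩
  · exact ⟨(0, 0), by
      simp only [singlePoly, Finset.mem_image, Finset.mem_Icc]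
      exact ⟨0, ⟨le_refl 0, by omega⟩, rfl⟩, rfl⟩

lemma maxX_singlePoly {n : ℕ} (hn : 1 ≤ n) : maxX (singlePoly n) = 0 := by
  apply maxX_eq_of
  · intro c hc
    simp only [singlePoly, Finset.mem_image] at hc
    obtain ⟨y, hy, rfl⟩ := hc
    exact le_refl 0
  · exact ⟨(0, 0), by
      simp only [singlePoly, Finset.mem_image, Finset.mem_Icc]
      exact ⟨0, ⟨le_refl 0, by omega⟩, rfl⟩, rfl⟩

lemma spanZ_singlePoly {n : ℕ} (hn : 1 ≤ n) : spanZ (singlePoly n) = n := by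
  rw [spanZ, lastCol, maxX_singlePoly hn, columnYs_singlePoly, if_pos rfl,
    mn_Icc (by omega), mx_Icc (by omega)]
  ring

lemma eq_singlePoly {n : ℕ} {P : Finset Cell}
    (hP : IsCheesy 1 P ∧ Normalized P ∧ P.card = n) (hmx : maxX P = 0) :
    P = singlePoly n := by
  have hcols := colsP hP
  obtain ⟨a, b, hab, heq⟩ := hcols.first
  have hx0 : ∀ c : Cell, c ∈ P → c.1 = 0 := by
    intro c hc
    have h1 := (hP.2.1.1 c hc).1
    have h2 := le_maxX hc
    omega
  have hPeq : P = (Finset.Icc a b).image (fun y => ((0:ℤ), y)) := by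
    rw [← heq]
    ext c
    simp only [Finset.mem_image]
    constructor
    · intro hc
      exact ⟨c.2, mem_columnYs.2 (by rwa [show ((0:ℤ), c.2) = c from Prod.ext (hx0 c hc).symm rfl]),
        Prod.ext (hx0 c hc).symm rfl⟩
    · rintro ⟨y, hy, rfl⟩
      exact mem_columnYs.1 hy
  have ha0 : a = 0 := by
    have h1 : (0:ℤ) ≤ a := by
      have : ((0:ℤ), a) ∈ P := by
        rw [hPeq]
        exact Finset.mem_image.2 ⟨a, Finset.mem_Icc.2 ⟨le_refl a, hab⟩, rfl⟩
      exact (hP.2.1.1 _ this).2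
    obtain ⟨c, hc, hcy⟩ := hP.2.1.2.2
    have : c.2 ∈ Finset.Icc a b := by
      rw [← heq]
      exact mem_columnYs.2 (by rwa [show ((0:ℤ), c.2) = c from Prod.ext (hx0 c hc).symm rfl])
    simp only [Finset.mem_Icc] at this
    omega
  have hbn : b = (n:ℤ) - 1 := by
    have h1 : P.card = (b - a + 1).toNat := by
      rw [hPeq, card_vline, Int.card_Icc]
      omega
    have h2 := hP.2.2
    omega
  rw [hPeq, ha0, hbn, singlePoly]

/-! #### sums over the placement set -/

lemma PlcF_disj (B T : ℤ) (κ : ℕ) :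
    Disjoint (Finset.Icc (B + 1 - κ) T ×ˢ ({0} : Finset ℕ))
      (Finset.Icc (B + 1) (T - 1) ×ˢ Finset.Icc 1 (κ - 1)) := by
  rw [Finset.disjoint_left]
  intro p hp1 hp2
  simp only [Finset.mem_product, Finset.mem_Icc, Finset.mem_singleton] at hp1 hp2
  omega

lemma card_PlcF {B T : ℤ} {κ : ℕ} (h : B ≤ T - 1) (hκ : 1 ≤ κ) :
    (((PlcF B T κ).card) : ℤ) = κ * (T - B) + 1 := by
  rw [PlcF, Finset.card_union_of_disjoint (PlcF_disj B T κ), Finset.card_product,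
    Finset.card_product, Int.card_Icc, Int.card_Icc, Nat.card_Icc, Finset.card_singleton]
  have h1 : ((T + 1 - (B + 1 - (κ:ℤ))).toNat : ℤ) = (T - B) + κ := by omega
  have h2 : ((T - 1 + 1 - (B + 1)).toNat : ℤ) = (T - B) - 1 := by omega
  have h3 : ((κ - 1 : ℕ) : ℤ) = (κ : ℤ) - 1 := by omega
  push_cast [h1, h2, h3]
  ring

lemma sum_ite_PlcF {B T : ℤ} {κ : ℕ} (h : B ≤ T - 1) (hκ : 1 ≤ κ) :
    (∑ p ∈ PlcF B T κ, (if p.2 = 0 then (0:ℤ) else 1)) = (T - B - 1) * (κ - 1) := by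
  rw [PlcF, Finset.sum_union (PlcF_disj B T κ)]
  have h1 : ∑ p ∈ Finset.Icc (B + 1 - κ) T ×ˢ ({0} : Finset ℕ),
      (if p.2 = 0 then (0:ℤ) else 1) = 0 := by
    apply Finset.sum_eq_zero
    intro p hp
    simp only [Finset.mem_product, Finset.mem_singleton] at hp
    rw [if_pos hp.2]
  have h2 : ∑ p ∈ Finset.Icc (B + 1) (T - 1) ×ˢ Finset.Icc 1 (κ - 1),
      (if p.2 = 0 then (0:ℤ) else 1)
      = ((Finset.Icc (B + 1) (T - 1) ×ˢ Finset.Icc 1 (κ - 1)).card : ℤ) := by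
    rw [Finset.sum_congr rfl (fun p hp => ?_), Finset.sum_const, nsmul_eq_mul, mul_one]
    simp only [Finset.mem_product, Finset.mem_Icc] at hp
    rw [if_neg (by omega)]
  rw [h1, h2, Finset.card_product, Int.card_Icc, Nat.card_Icc]
  have h4 : ((T - 1 + 1 - (B + 1)).toNat : ℤ) = (T - B) - 1 := by omega
  have h3 : ((κ - 1 : ℕ) : ℤ) = (κ : ℤ) - 1 := by omega
  push_cast [h4, h3]
  ring

end Cheesy
/-! ### M7b: the master bijection -/

namespace Cheesy

abbrev ExtData (n : ℕ) : Type :=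
  Σ j : {j : ℕ // j ∈ Finset.Ico 1 n}, Σ Q : CNt j.1,
    {p : ℤ × ℕ // p ∈ PlcF (mn (lastCol Q.1)) (mx (lastCol Q.1) + 1) (n - j.1)}

lemma extData_ext {n : ℕ} (x y : ExtData n) (h1 : x.1.1 = y.1.1)
    (h2 : HEq x.2.1.1 y.2.1.1) (h3 : HEq x.2.2.1 y.2.2.1) : x = y := by
  obtain ⟨⟨j, hj⟩, ⟨Q, hQ⟩, ⟨p, hp⟩⟩ := x
  obtain ⟨⟨j', hj'⟩, ⟨Q', hQ'⟩, ⟨p', hp'⟩⟩ := y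
  simp only at h1
  subst h1
  simp only [heq_eq_eq] at h2
  subst h2
  simp only [heq_eq_eq] at h3
  subst h3
  rfl

noncomputable def Ftot {n : ℕ} (hn : 2 ≤ n) : Unit ⊕ ExtData n → CNt n := fun x =>
  match x with
  | Sum.inl _ => ⟨singlePoly n, singlePoly_mem_CNt (by omega)⟩
  | Sum.inr ⟨j, Q, p⟩ => ⟨extP Q.1 (n - j.1) p.1, by
      have hj := Finset.mem_Ico.1 j.2
      have hκ : 1 ≤ n - j.1 := by omega
      refine ⟨cheesy_extP Q.2 hκ p.2, normalized_extP Q.2 hκ p.2, ?_⟩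
      rw [card_extP Q.2 hκ p.2]
      omega⟩

lemma Ftot_bij {n : ℕ} (hn : 2 ≤ n) : Function.Bijective (Ftot hn) := by
  constructor
  · rintro (u | ⟨j, Q, p⟩) (u' | ⟨j', Q', p'⟩) h
    · cases u; cases u'; rfl
    · exfalso
      have h' := congrArg (fun z : CNt n => maxX z.1) h
      simp only [Ftot] at h'
      have hj' := Finset.mem_Ico.1 j'.2
      have hκ' : 1 ≤ n - j'.1 := by omega
      rw [maxX_singlePoly (by omega), maxX_extP Q'.2 hκ' p'.2] at h'
      have := maxX_nonneg Q'.2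
      omega
    · exfalso
      have h' := congrArg (fun z : CNt n => maxX z.1) h
      simp only [Ftot] at h'
      have hj := Finset.mem_Ico.1 j.2
      have hκ : 1 ≤ n - j.1 := by omega
      rw [maxX_singlePoly (by omega), maxX_extP Q.2 hκ p.2] at h'
      have := maxX_nonneg Q.2
      omega
    · have h' := congrArg (fun z : CNt n => z.1) h
      simp only [Ftot] at h'
      have hj := Finset.mem_Ico.1 j.2
      have hj' := Finset.mem_Ico.1 j'.2
      have hκ : 1 ≤ n - j.1 := by omega
      have hκ' : 1 ≤ n - j'.1 := by omega
      have e1 : n - j.1 = n - j'.1 := by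
        have a1 := κof_extP Q.2 hκ p.2
        have a2 := κof_extP Q'.2 hκ' p'.2
        rw [h'] at a1
        omega
      have ej : j.1 = j'.1 := by omega
      have eQ : Q.1 = Q'.1 := by
        have a1 := Qof_extP Q.2 hκ p.2
        have a2 := Qof_extP Q'.2 hκ' p'.2
        rw [h'] at a1
        exact a1.symm.trans a2
      have ep : p.1 = p'.1 := by
        have a1 := pof_extP Q.2 hκ p.2
        have a2 := pof_extP Q'.2 hκ' p'.2
        rw [h'] at a1
        exact a1.symm.trans a2
      congr 1
      apply extData_ext
      · exact ej
      · cases j; cases j'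
        simp only at ej
        subst ej
        simp only [heq_eq_eq]
        exact eQ
      · cases j; cases j'
        simp only at ej
        subst ej
        cases Q; cases Q'
        simp only at eQ
        subst eQ
        simp only [heq_eq_eq]
        exact ep
  · intro P
    by_cases hmx : maxX P.1 = 0
    · exact ⟨Sum.inl (), Subtype.ext (eq_singlePoly P.2 hmx).symm⟩
    · have hmax : 1 ≤ maxX P.1 := by
        have h0 : 0 ≤ maxX P.1 := maxX_nonneg P.2
        omega
      have hκpos := κof_pos P.2 hmax
      have hκle : κof P.1 ≤ n := by
        rw [κof, lastCol, card_columnYs]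
        calc (P.1.filter (fun c => c.1 = maxX P.1)).card ≤ P.1.card :=
              Finset.card_filter_le _ _
          _ = n := P.2.2.2
      have hQcard := card_Qof P.2 hmax
      have hQpos : 1 ≤ (Qof P.1).card := Finset.card_pos.2 (cheesy_Qof P.2 hmax).1.1
      have hjmem : n - κof P.1 ∈ Finset.Ico 1 n := by
        rw [Finset.mem_Ico]
        omega
      have hκeq : n - (n - κof P.1) = κof P.1 := by omega
      refine ⟨Sum.inr ⟨⟨n - κof P.1, hjmem⟩,
        ⟨Qof P.1, cheesy_Qof P.2 hmax, normalized_Qof P.2 hmax, hQcard⟩,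
        ⟨pof P.1, by rw [hκeq]; exact (decode_ok P.2 hmax).1⟩⟩, ?_⟩
      apply Subtype.ext
      show extP (Qof P.1) (n - (n - κof P.1)) (pof P.1) = P.1
      rw [hκeq]
      exact extP_decomp P.2 hmax

/-- the master summation identity -/
lemma sum_CNt {n : ℕ} (hn : 2 ≤ n) (f : Finset Cell → ℤ) :
    (∑ P : CNt n, f P.1) = f (singlePoly n)
      + ∑ j ∈ Finset.Ico 1 n, ∑ Q : CNt j,
          ∑ p ∈ PlcF (mn (lastCol Q.1)) (mx (lastCol Q.1) + 1) (n - j),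
            f (extP Q.1 (n - j) p) := by
  rw [← Equiv.sum_comp (Equiv.ofBijective _ (Ftot_bij hn)) (fun P : CNt n => f P.1)]
  rw [show ⇑(Equiv.ofBijective _ (Ftot_bij hn)) = Ftot hn from rfl]
  rw [Fintype.sum_sum_type]
  congr 1
  · simp [Ftot]
  · rw [← Finset.univ_sigma_univ, Finset.sum_sigma]
    rw [← Finset.sum_coe_sort (Finset.Ico 1 n)
      (fun j => ∑ Q : CNt j, ∑ p ∈ PlcF (mn (lastCol Q.1)) (mx (lastCol Q.1) + 1) (n - j),
        f (extP Q.1 (n - j) p))]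
    apply Finset.sum_congr rfl
    intro j _
    rw [← Finset.univ_sigma_univ, Finset.sum_sigma]
    apply Finset.sum_congr rfl
    intro Q _
    rw [← Finset.sum_coe_sort (PlcF (mn (lastCol Q.1)) (mx (lastCol Q.1) + 1) (n - j.1))
      (fun p => f (extP Q.1 (n - j.1) p))]
    rfl

end Cheesy
/-! ### M7c: convolution identities -/

namespace Cheesy

lemma sum_one_CNt (j : ℕ) : (∑ _Q : CNt j, (1:ℤ)) = Cc j := by
  rw [Finset.sum_const, Cc_eq, nsmul_eq_mul, mul_one, Finset.card_univ]

lemma convC {n : ℕ} (hn : 2 ≤ n) :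
    Cc n = 1 + ∑ j ∈ Finset.Ico 1 n, (((n - j : ℕ) : ℤ) * Dd j + Cc j) := by
  rw [← sum_one_CNt n, sum_CNt hn (fun _ => (1:ℤ))]
  congr 1
  apply Finset.sum_congr rfl
  intro j hj
  rw [Finset.mem_Ico] at hj
  have hκ : 1 ≤ n - j := by omega
  have step : ∀ Q : CNt j,
      (∑ _p ∈ PlcF (mn (lastCol Q.1)) (mx (lastCol Q.1) + 1) (n - j), (1:ℤ))
      = ((n - j : ℕ) : ℤ) * spanZ Q.1 + 1 := by
    intro Q
    have hB : mn (lastCol Q.1) ≤ (mx (lastCol Q.1) + 1) - 1 := by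
      have hne := lastCol_nonempty Q.2
      have := mn_le (mx_mem _ hne)
      omega
    rw [Finset.sum_const, nsmul_eq_mul, mul_one, card_PlcF hB hκ, spanZ]
    ring
  rw [Finset.sum_congr rfl (fun Q _ => step Q), Finset.sum_add_distrib,
    ← Finset.mul_sum, sum_one_CNt]
  rfl

lemma convD {n : ℕ} (hn : 2 ≤ n) :
    Dd n = (n:ℤ) + ∑ j ∈ Finset.Ico 1 n,
      ((((n - j : ℕ) : ℤ)^2 + ((n - j : ℕ) : ℤ) - 1) * Dd j + Cc j) := by
  rw [show Dd n = ∑ P : CNt n, spanZ P.1 from rfl, sum_CNt hn spanZ,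
    spanZ_singlePoly (by omega)]
  congr 1
  apply Finset.sum_congr rfl
  intro j hj
  rw [Finset.mem_Ico] at hj
  have hκ : 1 ≤ n - j := by omega
  have step : ∀ Q : CNt j,
      (∑ p ∈ PlcF (mn (lastCol Q.1)) (mx (lastCol Q.1) + 1) (n - j),
        spanZ (extP Q.1 (n - j) p))
      = (((n - j : ℕ) : ℤ)^2 + ((n - j : ℕ) : ℤ) - 1) * spanZ Q.1 + 1 := by
    intro Q
    have hB : mn (lastCol Q.1) ≤ (mx (lastCol Q.1) + 1) - 1 := by
      have hne := lastCol_nonempty Q.2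
      have := mn_le (mx_mem _ hne)
      omega
    rw [Finset.sum_congr rfl (fun p hp => spanZ_extP Q.2 hκ hp)]
    rw [Finset.sum_add_distrib, Finset.sum_const, nsmul_eq_mul, card_PlcF hB hκ,
      sum_ite_PlcF hB hκ, spanZ]
    ring
  rw [Finset.sum_congr rfl (fun Q _ => step Q), Finset.sum_add_distrib,
    ← Finset.mul_sum, sum_one_CNt]
  rfl

end Cheesy
/-! ### M8: algebra -/

namespace Cheesy

noncomputable def S0 (n : ℕ) : ℤ := ∑ j ∈ Finset.Ico 1 n, Cc j
noncomputable def S1 (n : ℕ) : ℤ := ∑ j ∈ Finset.Ico 1 n, Dd j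
noncomputable def S2 (n : ℕ) : ℤ := ∑ j ∈ Finset.Ico 1 n, ((n:ℤ) - (j:ℤ)) * Dd j
noncomputable def S3 (n : ℕ) : ℤ := ∑ j ∈ Finset.Ico 1 n, ((n:ℤ) - (j:ℤ))^2 * Dd j

lemma identC {n : ℕ} (hn : 1 ≤ n) : Cc n = 1 + S2 n + S0 n := by
  rcases Nat.lt_or_ge n 2 with h | h
  · have h1 : n = 1 := by omega
    subst h1
    rw [Cc_one, S0, S2, Finset.Ico_self, Finset.sum_empty, Finset.sum_empty]
    ring
  · rw [convC h]
    have hs : ∑ j ∈ Finset.Ico 1 n, (((n - j : ℕ) : ℤ) * Dd j + Cc j)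
        = ∑ j ∈ Finset.Ico 1 n, (((n:ℤ) - (j:ℤ)) * Dd j + Cc j) := by
      apply Finset.sum_congr rfl
      intro j hj
      rw [Finset.mem_Ico] at hj
      rw [Nat.cast_sub (by omega : j ≤ n)]
    rw [hs, Finset.sum_add_distrib, S0, S2]
    ring

lemma identD {n : ℕ} (hn : 1 ≤ n) : Dd n = (n:ℤ) + S3 n + S2 n - S1 n + S0 n := by
  rcases Nat.lt_or_ge n 2 with h | h
  · have h1 : n = 1 := by omega
    subst h1
    rw [Dd_one, S0, S1, S2, S3, Finset.Ico_self]
    simp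
  · rw [convD h]
    have hs : ∑ j ∈ Finset.Ico 1 n, ((((n - j : ℕ) : ℤ)^2 + ((n - j : ℕ) : ℤ) - 1) * Dd j + Cc j)
        = ∑ j ∈ Finset.Ico 1 n,
            ((((n:ℤ) - (j:ℤ))^2 * Dd j + (((n:ℤ) - (j:ℤ)) * Dd j - Dd j)) + Cc j) := by
      apply Finset.sum_congr rfl
      intro j hj
      rw [Finset.mem_Ico] at hj
      rw [Nat.cast_sub (by omega : j ≤ n)]
      ring
    rw [hs, Finset.sum_add_distrib, Finset.sum_add_distrib, Finset.sum_sub_distrib,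
      S0, S1, S2, S3]
    ring

lemma S0_step {n : ℕ} (hn : 1 ≤ n) : S0 (n+1) = S0 n + Cc n := by
  rw [S0, S0, Finset.sum_Ico_succ_top hn]

lemma S1_step {n : ℕ} (hn : 1 ≤ n) : S1 (n+1) = S1 n + Dd n := by
  rw [S1, S1, Finset.sum_Ico_succ_top hn]

lemma S2_step {n : ℕ} (hn : 1 ≤ n) : S2 (n+1) = S2 n + S1 n + Dd n := by
  simp only [S1, S2]
  rw [Finset.sum_Ico_succ_top hn]
  have hs : ∑ j ∈ Finset.Ico 1 n, (((n+1:ℕ):ℤ) - (j:ℤ)) * Dd j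
      = ∑ j ∈ Finset.Ico 1 n, (((n:ℤ) - (j:ℤ)) * Dd j + Dd j) := by
    apply Finset.sum_congr rfl
    intro j hj
    push_cast
    ring
  rw [hs, Finset.sum_add_distrib]
  push_cast
  ring

lemma S3_step {n : ℕ} (hn : 1 ≤ n) : S3 (n+1) = S3 n + 2 * S2 n + S1 n + Dd n := by
  simp only [S1, S2, S3]
  rw [Finset.sum_Ico_succ_top hn]
  have hs : ∑ j ∈ Finset.Ico 1 n, (((n+1:ℕ):ℤ) - (j:ℤ))^2 * Dd j
      = ∑ j ∈ Finset.Ico 1 n, (((n:ℤ) - (j:ℤ))^2 * Dd j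
          + (2 * ((((n:ℤ) - (j:ℤ))) * Dd j) + Dd j)) := by
    apply Finset.sum_congr rfl
    intro j hj
    push_cast
    ring
  rw [hs, Finset.sum_add_distrib, Finset.sum_add_distrib, ← Finset.mul_sum]
  push_cast
  ring

lemma stepA {n : ℕ} (hn : 1 ≤ n) : Cc (n+1) = 2 * Cc n + S1 n + Dd n := by
  have h1 := identC hn
  have h2 := identC (show 1 ≤ n + 1 by omega)
  have h3 := S0_step hn
  have h4 := S2_step hn
  linarith

lemma stepB {n : ℕ} (hn : 1 ≤ n) :
    Dd (n+1) = 2 * Dd n + 2 * S2 n + 2 * S1 n + Cc n + 1 := by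
  have h1 := identD hn
  have h2 := identD (show 1 ≤ n + 1 by omega)
  have h3 := S0_step hn
  have h4 := S1_step hn
  have h5 := S2_step hn
  have h6 := S3_step hn
  push_cast at h2
  linarith

lemma recC {n : ℕ} (hn : 1 ≤ n) :
    Cc (n+2) = 3 * Cc (n+1) - 2 * Cc n + Dd (n+1) := by
  have h1 := stepA hn
  have h2 := stepA (show 1 ≤ n + 1 by omega)
  have h3 := S1_step hn
  linarith

lemma recD {n : ℕ} (hn : 1 ≤ n) :
    Dd (n+3) = 4 * Dd (n+2) - Dd (n+1) + Cc (n+2) - 2 * Cc (n+1) + Cc n := by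
  have b1 := stepB hn
  have b2 := stepB (show 1 ≤ n + 1 by omega)
  have b3 := stepB (show 1 ≤ n + 2 by omega)
  have s1 := S1_step hn
  have s2 := S1_step (show 1 ≤ n + 1 by omega)
  have t1 := S2_step hn
  have t2 := S2_step (show 1 ≤ n + 1 by omega)
  linarith

lemma rec4 {n : ℕ} (hn : 1 ≤ n) :
    Cc (n+4) - 6 * Cc (n+3) + 8 * Cc (n+2) - Cc (n+1)
      = Cc (n+3) - 6 * Cc (n+2) + 8 * Cc (n+1) - Cc n := by
  have r1 := recC (show 1 ≤ n + 2 by omega)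
  have r2 := recC (show 1 ≤ n + 1 by omega)
  have r3 := recC hn
  have r4 := recD hn
  have e1 : n + 2 + 2 = n + 4 := by ring
  have e2 : n + 2 + 1 = n + 3 := by ring
  have e3 : n + 1 + 2 = n + 3 := by ring
  have e4 : n + 1 + 1 = n + 2 := by ring
  rw [e1, e2] at r1
  rw [e3, e4] at r2
  linarith

/-! numeric base values -/

lemma S1_one : S1 1 = 0 := by rw [S1, Finset.Ico_self, Finset.sum_empty]
lemma S2_one : S2 1 = 0 := by rw [S2, Finset.Ico_self, Finset.sum_empty]

lemma Cc_two : Cc 2 = 3 := by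
  have := stepA (le_refl 1)
  rw [S1_one, Cc_one, Dd_one] at this
  linarith

lemma Dd_two : Dd 2 = 4 := by
  have := stepB (le_refl 1)
  rw [S1_one, S2_one, Cc_one, Dd_one] at this
  linarith

lemma S1_two : S1 2 = 1 := by
  have := S1_step (le_refl 1)
  rw [S1_one, Dd_one] at this
  linarith

lemma S2_two : S2 2 = 1 := by
  have := S2_step (le_refl 1)
  rw [S1_one, S2_one, Dd_one] at this
  linarith

lemma Cc_three : Cc 3 = 11 := by
  have := stepA (show (1:ℕ) ≤ 2 by omega)
  rw [S1_two, Cc_two, Dd_two] at this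
  linarith

lemma Dd_three : Dd 3 = 16 := by
  have := stepB (show (1:ℕ) ≤ 2 by omega)
  rw [S1_two, S2_two, Cc_two, Dd_two] at this
  linarith

lemma S1_three : S1 3 = 5 := by
  have := S1_step (show (1:ℕ) ≤ 2 by omega)
  rw [S1_two, Dd_two] at this
  linarith

lemma Cc_four : Cc 4 = 43 := by
  have := stepA (show (1:ℕ) ≤ 3 by omega)
  rw [S1_three, Cc_three, Dd_three] at this
  linarith

lemma main_rec : ∀ k : ℕ, Cc (k+4) = 6 * Cc (k+3) - 8 * Cc (k+2) + Cc (k+1) := by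
  intro k
  induction k with
  | zero =>
    rw [show 0+4 = 4 from rfl, show 0+3 = 3 from rfl, show 0+2 = 2 from rfl,
      show 0+1 = 1 from rfl, Cc_four, Cc_three, Cc_two, Cc_one]
    norm_num
  | succ k ih =>
    have h := rec4 (show 1 ≤ k + 1 by omega)
    have e1 : k + 1 + 4 = k + 5 := by ring
    have e2 : k + 1 + 3 = k + 4 := by ring
    have e3 : k + 1 + 2 = k + 3 := by ring
    have e4 : k + 1 + 1 = k + 2 := by ring
    rw [e1, e2, e3, e4] at h
    have : Cc (k+5) = 6 * Cc (k+4) - 8 * Cc (k+3) + Cc (k+2) := by linarith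
    rw [show k + 1 + 4 = k + 5 by ring, show k + 1 + 3 = k + 4 by ring,
      show k + 1 + 2 = k + 3 by ring, show k + 1 + 1 = k + 2 by ring]
    exact this

end Cheesy
/-- Initial values and linear recurrence for the number of level one cheesy polyominoes. -/
theorem stmt_4 :
    cheesyCount 1 1 = 1 ∧ cheesyCount 1 2 = 3 ∧ cheesyCount 1 3 = 11 ∧
    ∀ n : ℕ, 4 ≤ n →
      (cheesyCount 1 n : ℤ) = 6 * (cheesyCount 1 (n-1) : ℤ)
        - 8 * (cheesyCount 1 (n-2) : ℤ) + (cheesyCount 1 (n-3) : ℤ) := by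
  refine ⟨?_, ?_, ?_, ?_⟩
  · have h := Cheesy.Cc_one
    rw [Cheesy.Cc] at h
    exact_mod_cast h
  · have h := Cheesy.Cc_two
    rw [Cheesy.Cc] at h
    exact_mod_cast h
  · have h := Cheesy.Cc_three
    rw [Cheesy.Cc] at h
    exact_mod_cast h
  · intro n hn
    obtain ⟨k, rfl⟩ : ∃ k, n = k + 4 := ⟨n - 4, by omega⟩
    have h := Cheesy.main_rec k
    have e1 : k + 4 - 1 = k + 3 := by omega
    have e2 : k + 4 - 2 = k + 2 := by omega
    have e3 : k + 4 - 3 = k + 1 := by omega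
    rw [e1, e2, e3]
    simp only [Cheesy.Cc] at h
    exact h
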